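/- arXiv:1411.3568 — 6 statements merged into one kernel-verified Lean document; each statement's English description precedes it below -/
import Mathlib

section
/- Let X be a topological space and let (μ_n) be a sequence of Borel probability measures on X satisfying the large deviations principle with rate function J (where J is lower semicontinuous but not assumed to have compact sublevel sets). Let φ : X → ℝ be an upper semicontinuous function. Then limsup_{n→∞} (1/n) log ∫_X e^{n φ(x)} μ_n(dx) ≤ sup_{x∈X} [φ(x) − J(x)] holds if and only if lim_{M→∞} limsup_{n→∞} (1/n) log ∫_X e^{n φ(x)} 1{φ(x) > M} μ_n(dx) ≤ sup_{x∈X} [φ(x) − J(x)]. -/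
open MeasureTheory Filter Topology ENNReal

lemma my_mul_add_coe (r a : ℝ) (hr : 0 < r) (z : EReal) :
    (r : EReal) * ((a : EReal) + z) = (r : EReal) * a + (r : EReal) * z := by
  induction z with
  | bot => simp [EReal.add_bot, EReal.coe_mul_bot_of_pos hr]
  | coe z => norm_cast; ring
  | top =>
      rw [EReal.add_top_of_ne_bot (EReal.coe_ne_bot a), EReal.coe_mul_top_of_pos hr,
        EReal.add_top_of_ne_bot]
      exact EReal.coe_ne_bot _

lemma my_rn_nonneg (n : ℕ) : (0 : EReal) ≤ ((n : ℝ)⁻¹ : EReal) := by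
  rw [← EReal.coe_inv]
  exact_mod_cast inv_nonneg.2 (Nat.cast_nonneg n)

lemma my_tendsto_inv_mul_const (c : ℝ) :
    Tendsto (fun n : ℕ => ((n : ℝ)⁻¹ : EReal) * (c : EReal)) atTop (nhds (0 : EReal)) := by
  have h : Tendsto (fun n : ℕ => ((n : ℝ)⁻¹ * c : ℝ)) atTop (nhds 0) := by
    simpa using (tendsto_natCast_atTop_atTop (R := ℝ)).inv_tendsto_atTop.mul_const c
  have := (EReal.tendsto_coe (m := fun n : ℕ => ((n : ℝ)⁻¹ * c : ℝ)) (a := 0)).2 h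
  simpa [EReal.coe_mul, EReal.coe_inv] using this

lemma my_log_two : ENNReal.log 2 = (Real.log 2 : EReal) := by
  rw [show (2 : ℝ≥0∞) = ENNReal.ofReal 2 by norm_num, ENNReal.log_ofReal_of_pos (by norm_num)]

lemma my_limsup_log_add_le {f g : ℕ → ℝ≥0∞} {c : EReal}
    (hf : limsup (fun n : ℕ => ((n : ℝ)⁻¹ : EReal) * ENNReal.log (f n)) atTop ≤ c)
    (hg : limsup (fun n : ℕ => ((n : ℝ)⁻¹ : EReal) * ENNReal.log (g n)) atTop ≤ c) :
    limsup (fun n : ℕ => ((n : ℝ)⁻¹ : EReal) * ENNReal.log (f n + g n)) atTop ≤ c := by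
  simp only [← EReal.coe_inv] at hf hg ⊢
  set u : ℕ → EReal := fun n => (((n : ℝ)⁻¹ : ℝ) : EReal) * (Real.log 2 : EReal) with hu
  set m : ℕ → EReal := fun n =>
    ((((n : ℝ)⁻¹ : ℝ) : EReal) * ENNReal.log (f n)) ⊔ ((((n : ℝ)⁻¹ : ℝ) : EReal) * ENNReal.log (g n)) with hm
  have hpt : ∀ᶠ n : ℕ in atTop, (((n : ℝ)⁻¹ : ℝ) : EReal) * ENNReal.log (f n + g n) ≤ u n + m n := by
    filter_upwards [eventually_ge_atTop 1] with n hn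
    have hrpos : (0 : ℝ) < (n : ℝ)⁻¹ := by positivity
    have hr0 : (0 : EReal) ≤ (((n : ℝ)⁻¹ : ℝ) : EReal) := by exact_mod_cast hrpos.le
    have h1 : ENNReal.log (f n + g n) ≤ (Real.log 2 : EReal) + (ENNReal.log (f n) ⊔ ENNReal.log (g n)) := by
      have : f n + g n ≤ 2 * (f n ⊔ g n) := by
        rw [two_mul]; exact add_le_add le_sup_left le_sup_right
      calc ENNReal.log (f n + g n) ≤ ENNReal.log (2 * (f n ⊔ g n)) := ENNReal.log_monotone this
        _ = ENNReal.log 2 + ENNReal.log (f n ⊔ g n) := ENNReal.log_mul_add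
        _ = (Real.log 2 : EReal) + (ENNReal.log (f n) ⊔ ENNReal.log (g n)) := by
            rw [my_log_two, ENNReal.log_monotone.map_max]
    calc (((n : ℝ)⁻¹ : ℝ) : EReal) * ENNReal.log (f n + g n)
        ≤ (((n : ℝ)⁻¹ : ℝ) : EReal) * ((Real.log 2 : EReal) + (ENNReal.log (f n) ⊔ ENNReal.log (g n))) :=
          mul_le_mul_of_nonneg_left h1 hr0
      _ = u n + (((n : ℝ)⁻¹ : ℝ) : EReal) * (ENNReal.log (f n) ⊔ ENNReal.log (g n)) := by
          rw [my_mul_add_coe _ _ hrpos]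
      _ ≤ u n + m n := by
          refine add_le_add_right ?_ _
          rcases le_total (ENNReal.log (f n)) (ENNReal.log (g n)) with h | h
          · rw [sup_eq_right.2 h]; exact le_sup_right
          · rw [sup_eq_left.2 h]; exact le_sup_left
  have hlimu : limsup u atTop = 0 := (my_tendsto_inv_mul_const _).limsup_eq
  calc limsup (fun n : ℕ => (((n : ℝ)⁻¹ : ℝ) : EReal) * ENNReal.log (f n + g n)) atTop
      ≤ limsup (fun n => u n + m n) atTop := limsup_le_limsup hpt
    _ ≤ limsup u atTop + limsup m atTop := EReal.limsup_add_le
        (Or.inl (by rw [hlimu]; exact EReal.zero_ne_bot)) (Or.inl (by rw [hlimu]; exact EReal.zero_ne_top))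
    _ ≤ 0 + (c ⊔ c) := by
        rw [hlimu]
        refine add_le_add_right ?_ _
        rw [hm, limsup_max]
        exact sup_le_sup hf hg
    _ = c := by simp

lemma my_limsup_log_sum_le {ι : Type*} (s : Finset ι) (A : ι → ℕ → ℝ≥0∞) {c : EReal}
    (h : ∀ i ∈ s, limsup (fun n : ℕ => ((n : ℝ)⁻¹ : EReal) * ENNReal.log (A i n)) atTop ≤ c) :
    limsup (fun n : ℕ => ((n : ℝ)⁻¹ : EReal) * ENNReal.log (∑ i ∈ s, A i n)) atTop ≤ c := by
  induction s using Finset.cons_induction with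
  | empty =>
      simp only [Finset.sum_empty, ENNReal.log_zero]
      have hev : ∀ᶠ n : ℕ in atTop, ((n : ℝ)⁻¹ : EReal) * (⊥ : EReal) = (⊥ : EReal) := by
        filter_upwards [eventually_ge_atTop 1] with n hn
        rw [← EReal.coe_inv]
        exact EReal.coe_mul_bot_of_pos (by positivity)
      rw [limsup_congr hev, limsup_const]
      exact bot_le
  | cons i s hi ih =>
      simp only [Finset.sum_cons]
      exact my_limsup_log_add_le (h i (Finset.mem_cons_self i s))
        (ih fun j hj => h j (Finset.mem_cons_of_mem hj))

lemma my_piece {X : Type*} [MeasurableSpace X]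
    (μ : ℕ → Measure X) (φ : X → ℝ) (b : ℝ) (E F : Set X)
    (hEb : ∀ x ∈ E, φ x ≤ b) (hEF : E ⊆ F) {t c : EReal}
    (hubF : limsup (fun n : ℕ => ((n : ℝ)⁻¹ : EReal) * ENNReal.log (μ n F)) atTop ≤ t)
    (hc : (b : EReal) + t ≤ c) :
    limsup (fun n : ℕ => ((n : ℝ)⁻¹ : EReal) *
      ENNReal.log (∫⁻ x in E, ENNReal.ofReal (Real.exp (n * φ x)) ∂ μ n)) atTop ≤ c := by
  simp only [← EReal.coe_inv] at hubF ⊢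
  have step1 : ∀ n : ℕ, (∫⁻ x in E, ENNReal.ofReal (Real.exp (n * φ x)) ∂ μ n)
      ≤ ENNReal.ofReal (Real.exp (n * b)) * μ n F := by
    intro n
    calc ∫⁻ x in E, ENNReal.ofReal (Real.exp (n * φ x)) ∂ μ n
        ≤ ∫⁻ _ in E, ENNReal.ofReal (Real.exp (n * b)) ∂ μ n := by
          refine setLIntegral_mono measurable_const fun x hx => ?_
          exact ENNReal.ofReal_le_ofReal (Real.exp_le_exp.2
            (mul_le_mul_of_nonneg_left (hEb x hx) (Nat.cast_nonneg n)))
      _ = ENNReal.ofReal (Real.exp (n * b)) * μ n E := setLIntegral_const E _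
      _ ≤ ENNReal.ofReal (Real.exp (n * b)) * μ n F := mul_le_mul_right (measure_mono hEF) _
  have step2 : limsup (fun n : ℕ => (((n : ℝ)⁻¹ : ℝ) : EReal) *
      ENNReal.log (∫⁻ x in E, ENNReal.ofReal (Real.exp (n * φ x)) ∂ μ n)) atTop
      ≤ limsup (fun n : ℕ => (((n : ℝ)⁻¹ : ℝ) : EReal) *
        ENNReal.log (ENNReal.ofReal (Real.exp (n * b)) * μ n F)) atTop := by
    refine limsup_le_limsup (Eventually.of_forall fun n => ?_)
    refine mul_le_mul_of_nonneg_left (ENNReal.log_monotone (step1 n)) ?_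
    exact_mod_cast inv_nonneg.2 (Nat.cast_nonneg n)
  refine step2.trans ?_
  have step3 : ∀ᶠ n : ℕ in atTop, (((n : ℝ)⁻¹ : ℝ) : EReal) *
      ENNReal.log (ENNReal.ofReal (Real.exp (n * b)) * μ n F)
      = (b : EReal) + (((n : ℝ)⁻¹ : ℝ) : EReal) * ENNReal.log (μ n F) := by
    filter_upwards [eventually_ge_atTop 1] with n hn
    have hn' : (0 : ℝ) < (n : ℝ) := by exact_mod_cast hn
    rw [ENNReal.log_mul_add, ENNReal.log_ofReal_of_pos (Real.exp_pos _), Real.log_exp,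
      my_mul_add_coe _ _ (inv_pos.2 hn')]
    congr 1
    rw [← EReal.coe_mul]
    norm_cast
    field_simp
  rw [limsup_congr step3]
  calc limsup (fun n : ℕ => (b : EReal) + (((n : ℝ)⁻¹ : ℝ) : EReal) * ENNReal.log (μ n F)) atTop
      ≤ limsup (fun _ : ℕ => (b : EReal)) atTop +
        limsup (fun n : ℕ => (((n : ℝ)⁻¹ : ℝ) : EReal) * ENNReal.log (μ n F)) atTop :=
        EReal.limsup_add_le (Or.inl (by rw [limsup_const]; exact EReal.coe_ne_bot b))
          (Or.inl (by rw [limsup_const]; exact EReal.coe_ne_top b))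
    _ ≤ (b : EReal) + t := by rw [limsup_const]; exact add_le_add_right hubF _
    _ ≤ c := hc

/-- Varadhan's upper bound without goodness of the rate function: for an upper
semicontinuous integrand `φ`, the upper bound holds iff the tail condition holds. -/
theorem varadhan_upper_iff_tail
    {X : Type*} [TopologicalSpace X] [MeasurableSpace X] [BorelSpace X]
    (μ : ℕ → Measure X) [∀ n, IsProbabilityMeasure (μ n)]
    (J : X → ℝ≥0∞) (hJ : LowerSemicontinuous J)
    (hub : ∀ F : Set X, IsClosed F →
      Filter.limsup (fun n : ℕ => ((n : ℝ)⁻¹ : EReal) * ENNReal.log (μ n F)) Filter.atTop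
        ≤ -(⨅ x ∈ F, (J x : EReal)))
    (hlb : ∀ G : Set X, IsOpen G →
      -(⨅ x ∈ G, (J x : EReal)) ≤
        Filter.liminf (fun n : ℕ => ((n : ℝ)⁻¹ : EReal) * ENNReal.log (μ n G)) Filter.atTop)
    (φ : X → ℝ) (hφ : UpperSemicontinuous φ) :
    (Filter.limsup (fun n : ℕ => ((n : ℝ)⁻¹ : EReal) *
        ENNReal.log (∫⁻ x, ENNReal.ofReal (Real.exp (n * φ x)) ∂ μ n)) Filter.atTop
      ≤ ⨆ x, ((φ x : EReal) - (J x : EReal)))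
    ↔ (Filter.limsup (fun M : ℝ =>
        Filter.limsup (fun n : ℕ => ((n : ℝ)⁻¹ : EReal) *
          ENNReal.log (∫⁻ x in {x | M < φ x}, ENNReal.ofReal (Real.exp (n * φ x)) ∂ μ n))
          Filter.atTop) Filter.atTop
      ≤ ⨆ x, ((φ x : EReal) - (J x : EReal))) := by
  constructor
  · -- easy direction: the tail integral is dominated by the full integral
    intro h
    have mono1 : ∀ M : ℝ,
        Filter.limsup (fun n : ℕ => ((n : ℝ)⁻¹ : EReal) *
          ENNReal.log (∫⁻ x in {x | M < φ x}, ENNReal.ofReal (Real.exp (n * φ x)) ∂ μ n))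
          Filter.atTop
        ≤ Filter.limsup (fun n : ℕ => ((n : ℝ)⁻¹ : EReal) *
          ENNReal.log (∫⁻ x, ENNReal.ofReal (Real.exp (n * φ x)) ∂ μ n)) Filter.atTop := by
      intro M
      refine limsup_le_limsup (Eventually.of_forall fun n => ?_)
      exact mul_le_mul_of_nonneg_left
        (ENNReal.log_monotone (setLIntegral_le_lintegral _ _)) (my_rn_nonneg n)
    calc Filter.limsup (fun M : ℝ =>
        Filter.limsup (fun n : ℕ => ((n : ℝ)⁻¹ : EReal) *
          ENNReal.log (∫⁻ x in {x | M < φ x}, ENNReal.ofReal (Real.exp (n * φ x)) ∂ μ n))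
          Filter.atTop) Filter.atTop
        ≤ Filter.limsup (fun _ : ℝ =>
          Filter.limsup (fun n : ℕ => ((n : ℝ)⁻¹ : EReal) *
            ENNReal.log (∫⁻ x, ENNReal.ofReal (Real.exp (n * φ x)) ∂ μ n)) Filter.atTop)
            Filter.atTop := limsup_le_limsup (Eventually.of_forall mono1)
      _ = Filter.limsup (fun n : ℕ => ((n : ℝ)⁻¹ : EReal) *
            ENNReal.log (∫⁻ x, ENNReal.ofReal (Real.exp (n * φ x)) ∂ μ n)) Filter.atTop :=
            limsup_const _
      _ ≤ _ := h
  · -- hard direction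
    intro ht
    set S := ⨆ x, ((φ x : EReal) - (J x : EReal)) with hSdef
    by_contra hcon
    push_neg at hcon
    obtain ⟨c, hcS, hcL⟩ := EReal.exists_between_coe_real hcon
    refine absurd ?_ (not_le.2 hcL)
    -- now show the limsup is at most c
    obtain ⟨s, hs1, hs2⟩ := EReal.exists_between_coe_real hcS
    have hsc : s < c := by exact_mod_cast hs2
    set δ := c - s with hδdef
    have hδ : 0 < δ := sub_pos.2 hsc
    -- choose the tail threshold M
    have htail : ∀ᶠ M : ℝ in atTop,
        Filter.limsup (fun n : ℕ => ((n : ℝ)⁻¹ : EReal) *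
          ENNReal.log (∫⁻ x in {x | M < φ x}, ENNReal.ofReal (Real.exp (n * φ x)) ∂ μ n))
          Filter.atTop < (c : EReal) :=
      eventually_lt_of_limsup_lt (lt_of_le_of_lt ht hcS)
    obtain ⟨M, hM, hMs⟩ := (htail.and (eventually_ge_atTop s)).exists
    set K := ⌈(M - s) / δ⌉₊ with hKdef
    have hφm : Measurable φ := hφ.measurable
    -- the pieces of the decomposition
    set B : Set X := {x | φ x ≤ s} with hBdef
    set T : Set X := {x | M < φ x} with hTdef
    set E : ℕ → Set X := fun j => {x | s + j * δ < φ x ∧ φ x ≤ s + (j + 1) * δ} with hEdef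
    have hBm : MeasurableSet B := hφm measurableSet_Iic
    have hTm : MeasurableSet T := hφm measurableSet_Ioi
    have hEm : ∀ j : ℕ, MeasurableSet (E j) := fun j => hφm measurableSet_Ioc
    have hfm : ∀ n : ℕ, Measurable (fun x => ENNReal.ofReal (Real.exp (n * φ x))) := fun n =>
      ENNReal.measurable_ofReal.comp (Real.measurable_exp.comp (hφm.const_mul _))
    -- the cover
    have hcover : ∀ x : X, x ∈ B ∨ (∃ j < K, x ∈ E j) ∨ x ∈ T := by
      intro x
      by_cases h1 : φ x ≤ s
      · exact Or.inl h1
      by_cases h2 : M < φ x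
      · exact Or.inr (Or.inr h2)
      push_neg at h1 h2
      set t := φ x - s with htdef
      have htpos : 0 < t := sub_pos.2 h1
      have htM : t ≤ M - s := by simp only [htdef]; linarith
      set k := ⌈t / δ⌉₊ with hkdef
      have hk1 : 1 ≤ k := Nat.one_le_ceil_iff.2 (div_pos htpos hδ)
      have hkK : k ≤ K := Nat.ceil_le_ceil ((div_le_div_iff_of_pos_right hδ).2 htM)
      refine Or.inr (Or.inl ⟨k - 1, lt_of_lt_of_le (Nat.sub_lt hk1 one_pos) hkK, ?_, ?_⟩)
      · -- s + (k-1) δ < φ x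
        have hcast : ((k - 1 : ℕ) : ℝ) = (k : ℝ) - 1 := by
          rw [Nat.cast_sub hk1]; norm_num
        have h3 : ((k : ℝ) - 1) < t / δ := by
          have := Nat.ceil_lt_add_one (le_of_lt (div_pos htpos hδ))
          rw [← hkdef] at this
          linarith
        have h4 : ((k : ℝ) - 1) * δ < t := (lt_div_iff₀ hδ).1 h3
        rw [hcast]
        simp only [htdef] at h4
        linarith
      · -- φ x ≤ s + ((k-1)+1) δ
        have hcast : ((k - 1 : ℕ) : ℝ) + 1 = (k : ℝ) := by
          rw [Nat.cast_sub hk1]; norm_num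
        have h3 : t / δ ≤ (k : ℝ) := Nat.le_ceil _
        have h4 : t ≤ (k : ℝ) * δ := (div_le_iff₀ hδ).1 h3
        rw [hcast]
        simp only [htdef] at h4
        linarith
    -- the integral decomposition
    have hle : ∀ n : ℕ, (∫⁻ x, ENNReal.ofReal (Real.exp (n * φ x)) ∂ μ n)
        ≤ ((∫⁻ x in B, ENNReal.ofReal (Real.exp (n * φ x)) ∂ μ n)
          + ∑ j ∈ Finset.range K, ∫⁻ x in E j, ENNReal.ofReal (Real.exp (n * φ x)) ∂ μ n)
          + ∫⁻ x in T, ENNReal.ofReal (Real.exp (n * φ x)) ∂ μ n := by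
      intro n
      have hpt : ∀ x, ENNReal.ofReal (Real.exp (n * φ x))
          ≤ (B.indicator (fun x => ENNReal.ofReal (Real.exp (n * φ x))) x
            + ∑ j ∈ Finset.range K, (E j).indicator (fun x => ENNReal.ofReal (Real.exp (n * φ x))) x)
            + T.indicator (fun x => ENNReal.ofReal (Real.exp (n * φ x))) x := by
        intro x
        rcases hcover x with hx | ⟨j, hjK, hx⟩ | hx
        · calc ENNReal.ofReal (Real.exp (n * φ x))
              = B.indicator (fun x => ENNReal.ofReal (Real.exp (n * φ x))) x := by
                rw [Set.indicator_of_mem hx]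
            _ ≤ _ := le_add_right le_self_add
        · calc ENNReal.ofReal (Real.exp (n * φ x))
              = (E j).indicator (fun x => ENNReal.ofReal (Real.exp (n * φ x))) x := by
                rw [Set.indicator_of_mem hx]
            _ ≤ ∑ j ∈ Finset.range K,
                (E j).indicator (fun x => ENNReal.ofReal (Real.exp (n * φ x))) x :=
                Finset.single_le_sum
                  (f := fun j => (E j).indicator (fun x => ENNReal.ofReal (Real.exp (n * φ x))) x)
                  (fun _ _ => zero_le) (Finset.mem_range.2 hjK)
            _ ≤ _ := le_add_right le_add_self
        · calc ENNReal.ofReal (Real.exp (n * φ x))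
              = T.indicator (fun x => ENNReal.ofReal (Real.exp (n * φ x))) x := by
                rw [Set.indicator_of_mem hx]
            _ ≤ _ := le_add_self
      calc (∫⁻ x, ENNReal.ofReal (Real.exp (n * φ x)) ∂ μ n)
          ≤ ∫⁻ x, ((B.indicator (fun x => ENNReal.ofReal (Real.exp (n * φ x))) x
            + ∑ j ∈ Finset.range K, (E j).indicator (fun x => ENNReal.ofReal (Real.exp (n * φ x))) x)
            + T.indicator (fun x => ENNReal.ofReal (Real.exp (n * φ x))) x) ∂ μ n :=
            lintegral_mono hpt
        _ = _ := by
            rw [lintegral_add_right _ ((hfm n).indicator hTm),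
              lintegral_add_left ((hfm n).indicator hBm),
              lintegral_finset_sum _ (fun j _ => (hfm n).indicator (hEm j)),
              lintegral_indicator hBm, lintegral_indicator hTm]
            congr 1
            congr 1
            exact Finset.sum_congr rfl fun j _ => lintegral_indicator (hEm j) _
    -- pass to limsup
    refine le_trans (limsup_le_limsup (Eventually.of_forall fun n =>
      mul_le_mul_of_nonneg_left (ENNReal.log_monotone (hle n)) (my_rn_nonneg n))) ?_
    refine my_limsup_log_add_le (my_limsup_log_add_le ?_ ?_) hM.le
    · -- the piece {φ ≤ s}, with F = univ
      refine my_piece μ φ s B Set.univ (fun x hx => hx) (Set.subset_univ _)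
        (hub Set.univ isClosed_univ) ?_
      have h0 : (0 : EReal) ≤ ⨅ x ∈ Set.univ, (J x : EReal) :=
        le_iInf fun x => le_iInf fun _ => EReal.coe_ennreal_nonneg _
      have hneg : -(⨅ x ∈ Set.univ, (J x : EReal)) ≤ 0 := by
        rw [← neg_zero]
        exact EReal.neg_le_neg_iff.2 h0
      calc (s : EReal) + -(⨅ x ∈ Set.univ, (J x : EReal)) ≤ (s : EReal) + 0 :=
            add_le_add_right hneg _
        _ = (s : EReal) := add_zero _
        _ ≤ (c : EReal) := by exact_mod_cast hsc.le
    · -- the middle pieces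
      refine my_limsup_log_sum_le (Finset.range K) _ fun j _ => ?_
      have hFclosed : IsClosed {x | s + j * δ ≤ φ x} := by
        have : {x | s + j * δ ≤ φ x} = (φ ⁻¹' Set.Iio (s + j * δ))ᶜ := by
          ext x; simp [not_lt]
        rw [this]
        exact (hφ.isOpen_preimage _).isClosed_compl
      refine my_piece μ φ (s + (j + 1) * δ) (E j) {x | s + j * δ ≤ φ x}
        (fun x hx => hx.2) (fun x hx => hx.1.le)
        (hub _ hFclosed) ?_
      -- (s + (j+1)δ : EReal) + -(inf over F of J) ≤ c
      have hIlow : ((s + (j + 1) * δ - c : ℝ) : EReal) ≤ ⨅ x ∈ {x | s + j * δ ≤ φ x}, (J x : EReal) := by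
        refine le_iInf fun x => le_iInf fun hx => ?_
        have hxS : (φ x : EReal) - (J x : EReal) ≤ (s : EReal) :=
          le_trans (le_iSup (fun x => ((φ x : EReal) - (J x : EReal))) x) hs1.le
        rcases eq_or_ne (J x) ⊤ with hJx | hJx
        · rw [hJx]; simp
        · lift (J x) to NNReal using hJx with r hr
          rw [EReal.coe_nnreal_eq_coe_real] at hxS ⊢
          have hreal : φ x - (r : ℝ) ≤ s := by exact_mod_cast hxS
          have hjx : s + (j : ℝ) * δ ≤ φ x := hx
          have hexp : ((j : ℝ) + 1) * δ = (j : ℝ) * δ + δ := by ring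
          have hδeq : δ = c - s := rfl
          have : s + ((j : ℝ) + 1) * δ - c ≤ (r : ℝ) := by
            linarith [hjx, hreal, hδeq, hexp]
          exact_mod_cast this
      have hneg : -(⨅ x ∈ {x | s + j * δ ≤ φ x}, (J x : EReal))
          ≤ ((c - (s + (j + 1) * δ) : ℝ) : EReal) := by
        have := EReal.neg_le_neg_iff.2 hIlow
        rw [← EReal.coe_neg] at this
        convert this using 2
        ring
      calc ((s + (j + 1) * δ : ℝ) : EReal) + -(⨅ x ∈ {x | s + j * δ ≤ φ x}, (J x : EReal))
          ≤ ((s + (j + 1) * δ : ℝ) : EReal) + ((c - (s + (j + 1) * δ) : ℝ) : EReal) :=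
            add_le_add_right hneg _
        _ = (c : EReal) := by
            rw [← EReal.coe_add]
            norm_num
end

section
/- Let X be a topological space and let (μ_n) be a sequence of Borel probability measures on X satisfying the large deviations principle with rate function J (lower semicontinuous, not assumed to have compact sublevel sets). Let φ : X → ℝ be upper semicontinuous and suppose the tail condition lim_{M→∞} limsup_{n→∞} (1/n) log ∫_X e^{n φ(x)} 1{φ(x) > M} μ_n(dx) ≤ sup_{x∈X} [φ(x) − J(x)] holds. Then limsup_{n→∞} (1/n) log ∫_X e^{n φ(x)} μ_n(dx) ≤ sup_{x∈X} [φ(x) − J(x)]. -/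
set_option maxHeartbeats 1000000
open MeasureTheory Filter Topology ENNReal

private lemma mulAddAux (r a : ℝ) (hr : 0 ≤ r) (b : EReal) :
    (r : EReal) * ((a : EReal) + b) = ((r * a : ℝ) : EReal) + (r : EReal) * b := by
  induction b with
  | bot =>
    rcases hr.eq_or_lt with h | h
    · simp [← h]
    · rw [EReal.add_bot, EReal.mul_bot_of_pos (by exact_mod_cast h), EReal.add_bot]
  | coe x => norm_cast; ring
  | top =>
    rcases hr.eq_or_lt with h | h
    · simp [← h]
    · rw [EReal.coe_add_top, EReal.mul_top_of_pos (by exact_mod_cast h), EReal.coe_add_top]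

private lemma le_eps {x y : EReal} (h : ∀ ε : ℝ, 0 < ε → x ≤ (ε : EReal) + y) : x ≤ y := by
  induction y with
  | bot => simpa using h 1 one_pos
  | coe y =>
    by_contra hxy
    push_neg at hxy
    obtain ⟨z, hz1, hz2⟩ := EReal.exists_between_coe_real hxy
    have hzy : y < z := by exact_mod_cast hz1
    have h2 := h (z - y) (by linarith)
    rw [← EReal.coe_add] at h2
    have : x ≤ (z : EReal) := by simpa using h2
    exact absurd this (not_le.mpr hz2)
  | top => exact le_top

private lemma inv_nonneg' (n : ℕ) : (0 : EReal) ≤ (((n : ℝ) : EReal))⁻¹ := by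
  rw [← EReal.coe_inv]
  exact EReal.coe_nonneg.2 (by positivity)

private lemma limsup_const_add_le (a : ℝ) (w : ℕ → EReal) :
    Filter.limsup (fun n => (a : EReal) + w n) Filter.atTop
      ≤ (a : EReal) + Filter.limsup w Filter.atTop := by
  have h := EReal.limsup_add_le (f := Filter.atTop) (u := fun _ : ℕ => (a : EReal)) (v := w)
    (by rw [limsup_const]; exact .inl (EReal.coe_ne_bot a))
    (by rw [limsup_const]; exact .inl (EReal.coe_ne_top a))
  rwa [limsup_const] at h

private lemma piece_bound (a : ℝ) (m : ℕ → ℝ≥0∞) :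
    Filter.limsup (fun n : ℕ => ((n : ℝ)⁻¹ : EReal) *
        ENNReal.log (ENNReal.ofReal (Real.exp (n * a)) * m n)) Filter.atTop
      ≤ (a : EReal) + Filter.limsup (fun n : ℕ => ((n : ℝ)⁻¹ : EReal) *
          ENNReal.log (m n)) Filter.atTop := by
  have h1 : ∀ n : ℕ, 1 ≤ n → ((n : ℝ)⁻¹ : EReal) *
      ENNReal.log (ENNReal.ofReal (Real.exp (n * a)) * m n)
      = (a : EReal) + ((n : ℝ)⁻¹ : EReal) * ENNReal.log (m n) := by
    intro n hn
    have hn0 : (n : ℝ) ≠ 0 := Nat.cast_ne_zero.mpr (by omega)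
    rw [ENNReal.log_mul_add, ENNReal.log_ofReal_of_pos (Real.exp_pos _), Real.log_exp,
      ← EReal.coe_inv, mulAddAux _ _ (by positivity)]
    congr 2
    field_simp
  refine le_trans (limsup_le_limsup ?_) (limsup_const_add_le a _)
  filter_upwards [eventually_ge_atTop 1] with n hn
  exact le_of_eq (h1 n hn)

private lemma combine (u v : ℕ → ℝ≥0∞) :
    Filter.limsup (fun n : ℕ => ((n : ℝ)⁻¹ : EReal) * ENNReal.log (u n + v n)) Filter.atTop
      ≤ max (Filter.limsup (fun n : ℕ => ((n : ℝ)⁻¹ : EReal) * ENNReal.log (u n)) Filter.atTop)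
          (Filter.limsup (fun n : ℕ => ((n : ℝ)⁻¹ : EReal) * ENNReal.log (v n)) Filter.atTop) := by
  set Lu : ℕ → EReal := fun n => ((n : ℝ)⁻¹ : EReal) * ENNReal.log (u n) with hLu
  set Lv : ℕ → EReal := fun n => ((n : ℝ)⁻¹ : EReal) * ENNReal.log (v n) with hLv
  refine le_eps fun ε hε => ?_
  have h0 : Filter.Tendsto (fun n : ℕ => (n : ℝ)⁻¹) Filter.atTop (nhds 0) :=
    tendsto_inv_atTop_zero.comp tendsto_natCast_atTop_atTop
  have htend : Filter.Tendsto (fun n : ℕ => (n : ℝ)⁻¹ * Real.log 2) Filter.atTop (nhds 0) := by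
    simpa using h0.mul_const (Real.log 2)
  have hev : ∀ᶠ n : ℕ in Filter.atTop, (n : ℝ)⁻¹ * Real.log 2 < ε :=
    htend.eventually_lt_const hε
  have key : ∀ᶠ n : ℕ in Filter.atTop,
      ((n : ℝ)⁻¹ : EReal) * ENNReal.log (u n + v n) ≤ (ε : EReal) + max (Lu n) (Lv n) := by
    filter_upwards [hev] with n hn
    have h2 : u n + v n ≤ 2 * max (u n) (v n) := by
      rw [two_mul]
      exact add_le_add (le_max_left _ _) (le_max_right _ _)
    have hlog2 : ENNReal.log 2 = ((Real.log 2 : ℝ) : EReal) := by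
      rw [show (2 : ℝ≥0∞) = ENNReal.ofReal 2 by simp, ENNReal.log_ofReal_of_pos two_pos]
    calc ((n : ℝ)⁻¹ : EReal) * ENNReal.log (u n + v n)
        ≤ ((n : ℝ)⁻¹ : EReal) * ENNReal.log (2 * max (u n) (v n)) :=
          mul_le_mul_of_nonneg_left (ENNReal.log_monotone h2) (inv_nonneg' n)
      _ = (((n : ℝ)⁻¹ * Real.log 2 : ℝ) : EReal)
            + ((n : ℝ)⁻¹ : EReal) * ENNReal.log (max (u n) (v n)) := by
          rw [ENNReal.log_mul_add, hlog2, ← EReal.coe_inv, mulAddAux _ _ (by positivity)]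
      _ ≤ (ε : EReal) + max (Lu n) (Lv n) := by
          refine add_le_add (EReal.coe_le_coe_iff.2 hn.le) ?_
          rcases le_total (u n) (v n) with h | h
          · rw [max_eq_right h]
            exact le_max_right _ _
          · rw [max_eq_left h]
            exact le_max_left _ _
  calc Filter.limsup (fun n : ℕ => ((n : ℝ)⁻¹ : EReal) * ENNReal.log (u n + v n)) Filter.atTop
      ≤ Filter.limsup (fun n => (ε : EReal) + max (Lu n) (Lv n)) Filter.atTop :=
        limsup_le_limsup key
    _ ≤ (ε : EReal) + Filter.limsup (fun n => max (Lu n) (Lv n)) Filter.atTop :=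
        limsup_const_add_le ε _
    _ = (ε : EReal) + max (Filter.limsup Lu Filter.atTop) (Filter.limsup Lv Filter.atTop) := by
        rw [limsup_max]

private lemma combineFinset {ι : Type*} (s : Finset ι) (w : ι → ℕ → ℝ≥0∞) (b : EReal)
    (h : ∀ i ∈ s, Filter.limsup (fun n : ℕ => ((n : ℝ)⁻¹ : EReal) * ENNReal.log (w i n))
      Filter.atTop ≤ b) :
    Filter.limsup (fun n : ℕ => ((n : ℝ)⁻¹ : EReal) * ENNReal.log (∑ i ∈ s, w i n))
      Filter.atTop ≤ b := by
  classical
  induction s using Finset.induction_on with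
  | empty =>
    refine le_trans (limsup_le_of_le (by isBoundedDefault) ?_) bot_le
    filter_upwards [eventually_ge_atTop 1] with n hn
    have hn0 : ((n : ℝ) : EReal)⁻¹ ≠ 0 := by
      rw [← EReal.coe_inv]
      exact_mod_cast (by positivity : ((n:ℝ)⁻¹ : ℝ) ≠ 0)
    simp only [Finset.sum_empty, ENNReal.log_zero]
    rw [EReal.mul_bot_of_pos]
    exact lt_of_le_of_ne (inv_nonneg' n) (Ne.symm hn0)
  | @insert a s' hx ih =>
    simp only [Finset.sum_insert hx]
    refine le_trans (combine _ _) (max_le (h a (Finset.mem_insert_self a s')) ?_)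
    exact ih fun i hi => h i (Finset.mem_insert_of_mem hi)

/-- Varadhan's upper bound without goodness of the rate function: for an upper
semicontinuous integrand `φ`, the tail condition implies the upper bound. -/
theorem varadhan_upper_of_tail
    {X : Type*} [TopologicalSpace X] [MeasurableSpace X] [BorelSpace X]
    (μ : ℕ → Measure X) [∀ n, IsProbabilityMeasure (μ n)]
    (J : X → ℝ≥0∞) (hJ : LowerSemicontinuous J)
    (hub : ∀ F : Set X, IsClosed F →
      Filter.limsup (fun n : ℕ => ((n : ℝ)⁻¹ : EReal) * ENNReal.log (μ n F)) Filter.atTop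
        ≤ -(⨅ x ∈ F, (J x : EReal)))
    (hlb : ∀ G : Set X, IsOpen G →
      -(⨅ x ∈ G, (J x : EReal)) ≤
        Filter.liminf (fun n : ℕ => ((n : ℝ)⁻¹ : EReal) * ENNReal.log (μ n G)) Filter.atTop)
    (φ : X → ℝ) (hφ : UpperSemicontinuous φ)
    (htail : Filter.limsup (fun M : ℝ =>
        Filter.limsup (fun n : ℕ => ((n : ℝ)⁻¹ : EReal) *
          ENNReal.log (∫⁻ x in {x | M < φ x}, ENNReal.ofReal (Real.exp (n * φ x)) ∂ μ n))
          Filter.atTop) Filter.atTop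
      ≤ ⨆ x, ((φ x : EReal) - (J x : EReal))) :
    Filter.limsup (fun n : ℕ => ((n : ℝ)⁻¹ : EReal) *
        ENNReal.log (∫⁻ x, ENNReal.ofReal (Real.exp (n * φ x)) ∂ μ n)) Filter.atTop
      ≤ ⨆ x, ((φ x : EReal) - (J x : EReal)) := by
  by_contra hcon
  push_neg at hcon
  obtain ⟨c, hSc, hcL⟩ := exists_between hcon
  refine absurd ?_ hcL.not_ge
  obtain ⟨r, hSr, hrc⟩ := EReal.exists_between_coe_real hSc
  obtain ⟨r', hrr', hr'c⟩ := EReal.exists_between_coe_real hrc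
  have hrr'' : r < r' := by exact_mod_cast hrr'
  set δ : ℝ := r' - r with hδdef
  have hδ : 0 < δ := by simp only [hδdef]; linarith
  -- choose M with small tail and M ≥ r
  have hevM : ∀ᶠ M : ℝ in Filter.atTop,
      Filter.limsup (fun n : ℕ => ((n : ℝ)⁻¹ : EReal) *
        ENNReal.log (∫⁻ x in {x | M < φ x}, ENNReal.ofReal (Real.exp (n * φ x)) ∂ μ n))
        Filter.atTop < c :=
    eventually_lt_of_limsup_lt (lt_of_le_of_lt htail hSc)
  obtain ⟨M, hMtail, hMr⟩ := (hevM.and (eventually_ge_atTop r)).exists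
  set N : ℕ := ⌈(M - r) / δ⌉₊ with hNdef
  set b : ℕ → ℝ := fun i => M - i * δ with hb
  have hbN : b N ≤ r := by
    have h := Nat.le_ceil ((M - r) / δ)
    rw [div_le_iff₀ hδ, ← hNdef] at h
    simp only [hb]
    linarith
  set F : ℕ → Set X := fun i => {x | b (i + 1) ≤ φ x} with hF
  have hFclosed : ∀ i, IsClosed (F i) := by
    intro i
    have : F i = (φ ⁻¹' Set.Iio (b (i + 1)))ᶜ := by
      ext x; simp [hF, not_lt]
    rw [this]
    exact (hφ.isOpen_preimage (b (i + 1))).isClosed_compl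
  have hφm : Measurable φ := hφ.measurable
  have hFm : ∀ i, MeasurableSet (F i) := fun i => (hFclosed i).measurableSet
  have hTm : MeasurableSet {x | M < φ x} := measurableSet_lt measurable_const hφm
  have hgm : ∀ n : ℕ, Measurable fun x => ENNReal.ofReal (Real.exp (n * φ x)) :=
    fun n => ((hφm.const_mul (n : ℝ)).exp).ennreal_ofReal
  -- the basic integral estimate
  have hA : ∀ n : ℕ, (∫⁻ x, ENNReal.ofReal (Real.exp (n * φ x)) ∂ μ n)
      ≤ (∫⁻ x in {x | M < φ x}, ENNReal.ofReal (Real.exp (n * φ x)) ∂ μ n)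
        + (ENNReal.ofReal (Real.exp (n * b N))
          + ∑ i ∈ Finset.range N, ENNReal.ofReal (Real.exp (n * b i)) * μ n (F i)) := by
    intro n
    have hpt : ∀ x, ENNReal.ofReal (Real.exp (n * φ x))
        ≤ ({x | M < φ x}).indicator (fun x => ENNReal.ofReal (Real.exp (n * φ x))) x
          + (ENNReal.ofReal (Real.exp (n * b N))
            + ∑ i ∈ Finset.range N,
              (F i).indicator (fun _ => ENNReal.ofReal (Real.exp (n * b i))) x) := by
      intro x
      by_cases h1 : M < φ x
      · refine le_trans ?_ le_self_add
        exact le_of_eq (Set.indicator_of_mem (show x ∈ {x | M < φ x} from h1)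
          (fun x => ENNReal.ofReal (Real.exp (n * φ x)))).symm
      · push_neg at h1
        by_cases h2 : φ x ≤ b N
        · have hle : ENNReal.ofReal (Real.exp (n * φ x)) ≤ ENNReal.ofReal (Real.exp (n * b N)) :=
            ENNReal.ofReal_le_ofReal
              (Real.exp_le_exp.mpr (mul_le_mul_of_nonneg_left h2 (Nat.cast_nonneg n)))
          exact le_trans hle (le_trans le_self_add le_add_self)
        · push_neg at h2
          have hbNx : M - N * δ < φ x := h2
          set i : ℕ := ⌊(M - φ x) / δ⌋₊ with hidef
          have hq0 : 0 ≤ (M - φ x) / δ := div_nonneg (by linarith) hδ.le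
          have hiN : i < N := by
            rw [hidef, Nat.floor_lt hq0, div_lt_iff₀ hδ]
            linarith
          have hmem : x ∈ F i := by
            show b (i + 1) ≤ φ x
            have hlt : (M - φ x) / δ < (i : ℝ) + 1 := Nat.lt_floor_add_one _
            rw [div_lt_iff₀ hδ] at hlt
            simp only [hb]
            push_cast
            nlinarith
          have hval : φ x ≤ b i := by
            have h3 := Nat.floor_le hq0
            rw [le_div_iff₀ hδ] at h3
            simp only [hb]
            nlinarith
          have hterm : ENNReal.ofReal (Real.exp (n * φ x))
              ≤ (F i).indicator (fun _ => ENNReal.ofReal (Real.exp (n * b i))) x := by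
            rw [Set.indicator_of_mem hmem]
            exact ENNReal.ofReal_le_ofReal
              (Real.exp_le_exp.mpr (mul_le_mul_of_nonneg_left hval (Nat.cast_nonneg n)))
          refine le_trans hterm (le_trans (Finset.single_le_sum
            (f := fun i => (F i).indicator (fun _ => ENNReal.ofReal (Real.exp (n * b i))) x)
            (fun _ _ => zero_le) (Finset.mem_range.mpr hiN)) ?_)
          exact le_trans le_add_self le_add_self
    calc (∫⁻ x, ENNReal.ofReal (Real.exp (n * φ x)) ∂ μ n)
        ≤ ∫⁻ x, (({x | M < φ x}).indicator (fun x => ENNReal.ofReal (Real.exp (n * φ x))) x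
          + (ENNReal.ofReal (Real.exp (n * b N))
            + ∑ i ∈ Finset.range N,
              (F i).indicator (fun _ => ENNReal.ofReal (Real.exp (n * b i))) x)) ∂ μ n :=
          lintegral_mono hpt
      _ = _ := by
          rw [lintegral_add_left ((hgm n).indicator hTm), lintegral_indicator hTm,
            lintegral_add_left measurable_const, lintegral_const, measure_univ, mul_one,
            lintegral_finset_sum _ (fun i _ => measurable_const.indicator (hFm i))]
          congr 2
          refine Finset.sum_congr rfl fun i _ => ?_
          rw [lintegral_indicator_const (hFm i)]
  -- pass to limsups
  refine le_trans (limsup_le_limsup (Filter.Eventually.of_forall fun n =>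
    mul_le_mul_of_nonneg_left (ENNReal.log_monotone (hA n)) (inv_nonneg' n))) ?_
  refine le_trans (combine _ _) (max_le hMtail.le ?_)
  refine le_trans (combine _ _) (max_le ?_ ?_)
  · -- bottom piece
    have hev : ∀ᶠ n : ℕ in Filter.atTop, ((n : ℝ)⁻¹ : EReal) *
        ENNReal.log (ENNReal.ofReal (Real.exp (n * b N))) ≤ ((b N : ℝ) : EReal) := by
      filter_upwards [eventually_ge_atTop 1] with n hn
      have hn0 : (n : ℝ) ≠ 0 := Nat.cast_ne_zero.mpr (by omega)
      rw [ENNReal.log_ofReal_of_pos (Real.exp_pos _), Real.log_exp, ← EReal.coe_inv,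
        ← EReal.coe_mul]
      apply le_of_eq
      congr 1
      field_simp
    refine le_trans (limsup_le_of_le (by isBoundedDefault) hev) ?_
    exact le_trans (EReal.coe_le_coe_iff.2 hbN) hrc.le
  · -- the slices
    refine combineFinset (Finset.range N)
      (fun i n => ENNReal.ofReal (Real.exp (n * b i)) * μ n (F i)) c fun i _ => ?_
    have h3 : -(⨅ x ∈ F i, (J x : EReal)) ≤ ((r - b (i + 1) : ℝ) : EReal) := by
      rw [EReal.neg_le]
      refine le_iInf₂ fun x hx => ?_
      rw [← EReal.coe_neg]
      rcases eq_or_ne (J x) ⊤ with hJtop | hJtop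
      · simp [hJtop]
      · lift J x to NNReal using hJtop with j hj
        rw [EReal.coe_nnreal_eq_coe_real, EReal.coe_le_coe_iff]
        have hxS : (φ x : EReal) - ((j : ℝ≥0∞) : EReal) ≤ (r : EReal) := by
          refine le_trans ?_ hSr.le
          rw [hj]
          exact le_iSup (fun x => (φ x : EReal) - (J x : EReal)) x
        rw [EReal.coe_nnreal_eq_coe_real, ← EReal.coe_sub, EReal.coe_le_coe_iff] at hxS
        have hxF : b (i + 1) ≤ φ x := hx
        linarith
    calc Filter.limsup (fun n : ℕ => ((n : ℝ)⁻¹ : EReal) *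
          ENNReal.log (ENNReal.ofReal (Real.exp (n * b i)) * μ n (F i))) Filter.atTop
        ≤ ((b i : ℝ) : EReal) + Filter.limsup (fun n : ℕ => ((n : ℝ)⁻¹ : EReal) *
            ENNReal.log (μ n (F i))) Filter.atTop := piece_bound (b i) _
      _ ≤ ((b i : ℝ) : EReal) + -(⨅ x ∈ F i, (J x : EReal)) :=
          add_le_add_right (hub (F i) (hFclosed i)) _
      _ ≤ ((b i : ℝ) : EReal) + ((r - b (i + 1) : ℝ) : EReal) := add_le_add_right h3 _
      _ = ((r' : ℝ) : EReal) := by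
          rw [← EReal.coe_add]
          norm_cast
          simp only [hb, hδdef]
          push_cast
          ring
      _ ≤ c := hr'c.le
end

section
/- Let X be a topological space and let (μ_n) be a sequence of Borel probability measures on X satisfying the large deviations principle with rate function J (lower semicontinuous, not assumed to have compact sublevel sets). Assume J is continuous. Let φ : X → [−∞,∞] be any Borel measurable function and write φ_M = φ ∧ M for M ∈ ℝ. Then limsup_{n→∞} (1/n) log ∫_X e^{n φ(x)} μ_n(dx) ≤ lim_{M→∞} sup_{x∈X} [φ_M(x) − J(x)] holds if and only if lim_{M→∞} limsup_{n→∞} (1/n) log ∫_X e^{n φ(x)} 1{φ(x) > M} μ_n(dx) ≤ lim_{M→∞} sup_{x∈X} [φ_M(x) − J(x)]. -/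
open MeasureTheory Filter Topology ENNReal

namespace VaradhanAux


lemma sc_nonneg (n : ℕ) : (0 : EReal) ≤ ((n : ℝ)⁻¹ : EReal) :=
  EReal.coe_nonneg.2 (by positivity)

lemma coe_mul_add_of_nonneg {r : ℝ} (hr : 0 ≤ r) (x y : EReal) :
    (r : EReal) * (x + y) = (r : EReal) * x + (r : EReal) * y := by
  rcases hr.eq_or_lt with h | h
  · simp [← h]
  · induction x with
    | bot => simp [EReal.coe_mul_bot_of_pos h]
    | coe a =>
      induction y with
      | bot => simp [EReal.coe_mul_bot_of_pos h, ← EReal.coe_mul]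
      | coe b => norm_cast; ring
      | top =>
        rw [EReal.coe_add_top, EReal.coe_mul_top_of_pos h, ← EReal.coe_mul,
          EReal.coe_add_top]
    | top =>
      induction y with
      | bot =>
        rw [EReal.add_bot, EReal.coe_mul_bot_of_pos h, EReal.coe_mul_top_of_pos h,
          EReal.add_bot]
      | coe b =>
        rw [EReal.top_add_coe, EReal.coe_mul_top_of_pos h, ← EReal.coe_mul,
          EReal.top_add_coe]
      | top =>
        rw [EReal.top_add_top, EReal.coe_mul_top_of_pos h, EReal.top_add_top]

lemma aux_tendsto (r : ℝ) :
    Tendsto (fun n : ℕ => ((n : ℝ)⁻¹ : EReal) * (r : EReal)) atTop (𝓝 (0 : EReal)) := by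
  have h : Tendsto (fun n : ℕ => ((n : ℝ)⁻¹ * r : ℝ)) atTop (𝓝 (0 : ℝ)) := by
    simpa using tendsto_inv_atTop_nhds_zero_nat.mul_const r
  have h2 := EReal.tendsto_coe.2 h
  simpa only [EReal.coe_mul, EReal.coe_inv, EReal.coe_zero] using h2

lemma aux_limsup_log (C : ℝ≥0∞) (h0 : C ≠ 0) (ht : C ≠ ⊤) :
    limsup (fun n : ℕ => ((n : ℝ)⁻¹ : EReal) * ENNReal.log C) atTop = 0 := by
  have hb : ENNReal.log C ≠ ⊥ := by simp [h0]
  have htp : ENNReal.log C ≠ ⊤ := by simp [ht]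
  rw [← EReal.coe_toReal htp hb]
  exact (aux_tendsto _).limsup_eq

lemma aux_limsup_const_add (b : EReal) (hbb : b ≠ ⊥) (hbt : b ≠ ⊤) (g : ℕ → EReal) :
    limsup (fun n => b + g n) atTop ≤ b + limsup g atTop := by
  have h := EReal.limsup_add_le (f := atTop) (u := fun _ : ℕ => b) (v := g)
    (by rw [limsup_const]; exact .inl hbb) (by rw [limsup_const]; exact .inl hbt)
  simpa [limsup_const, Pi.add_def] using h

lemma aux_coe_ennreal (x : ℝ≥0∞) (hx : x ≠ ⊤) :
    (x : EReal) = ((x.toReal : ℝ) : EReal) := by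
  have h1 : (x : EReal) ≠ ⊤ := by
    refine ne_of_lt ?_
    rw [← EReal.coe_ennreal_top]
    exact EReal.coe_ennreal_lt_coe_ennreal_iff.2 hx.lt_top
  rw [← EReal.coe_toReal h1 (EReal.coe_ennreal_ne_bot x), EReal.toReal_coe_ennreal]

lemma aux_mul_sup_le (n : ℕ) (x y : EReal) :
    ((n : ℝ)⁻¹ : EReal) * (x ⊔ y) ≤ (((n : ℝ)⁻¹ : EReal) * x) ⊔ (((n : ℝ)⁻¹ : EReal) * y) := by
  rcases le_total x y with h | h
  · rw [sup_of_le_right h]; exact le_sup_right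
  · rw [sup_of_le_left h]; exact le_sup_left

lemma aux_log_sup (x y : ℝ≥0∞) :
    ENNReal.log (x ⊔ y) = ENNReal.log x ⊔ ENNReal.log y := by
  rcases le_total x y with h | h
  · rw [sup_of_le_right h, sup_of_le_right (ENNReal.log_monotone h)]
  · rw [sup_of_le_left h, sup_of_le_left (ENNReal.log_monotone h)]

lemma aux_nat_nonneg (n : ℕ) : (0 : EReal) ≤ (n : EReal) := by
  rw [← EReal.coe_coe_eq_natCast]
  exact EReal.coe_nonneg.2 (Nat.cast_nonneg n)


lemma psi_limsup_le_zero {X : Type*} [TopologicalSpace X] [MeasurableSpace X] [BorelSpace X]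
    (μ : ℕ → Measure X) (J : X → ℝ≥0∞)
    (hub : ∀ F : Set X, IsClosed F →
      Filter.limsup (fun n : ℕ => ((n : ℝ)⁻¹ : EReal) * ENNReal.log (μ n F)) Filter.atTop
        ≤ -(⨅ x ∈ F, (J x : EReal)))
    (ψ : X → ℝ≥0∞) (hψ : Continuous ψ) (hψJ : ∀ x, ψ x ≤ J x)
    (c : ℝ≥0∞) (hc : c ≠ ⊤) (hψc : ∀ x, ψ x ≤ c) :
    limsup (fun n : ℕ => ((n : ℝ)⁻¹ : EReal) *
      ENNReal.log (∫⁻ x, EReal.exp ((n : EReal) * (ψ x : EReal)) ∂ μ n)) atTop ≤ 0 := by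
  set V := limsup (fun n : ℕ => ((n : ℝ)⁻¹ : EReal) *
      ENNReal.log (∫⁻ x, EReal.exp ((n : EReal) * (ψ x : EReal)) ∂ μ n)) atTop with hV
  suffices hmain : ∀ k : ℕ, 1 ≤ k → V ≤ ((c.toReal / k : ℝ) : EReal) by
    by_contra hcon
    rw [not_le] at hcon
    obtain ⟨ε, hε0, hεV⟩ := EReal.exists_between_coe_real hcon
    have hε0' : (0 : ℝ) < ε := by exact_mod_cast hε0
    obtain ⟨k, hk⟩ := exists_nat_gt (c.toReal / ε)
    have hk1 : 1 ≤ k := by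
      have : (0 : ℝ) ≤ c.toReal / ε := div_nonneg ENNReal.toReal_nonneg hε0'.le
      have : (0 : ℝ) < k := lt_of_le_of_lt this hk
      exact_mod_cast Nat.one_le_iff_ne_zero.2 (by exact_mod_cast this.ne')
    have hck : c.toReal / k < ε := by
      rw [div_lt_iff₀ (by positivity)]
      rw [div_lt_iff₀ hε0'] at hk
      linarith [hk]
    have := hmain k hk1
    have h2 : ((c.toReal / k : ℝ) : EReal) < (ε : EReal) := EReal.coe_lt_coe_iff.2 hck
    exact absurd ((this.trans h2.le).trans_lt hεV) (lt_irrefl V)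
  intro k hk
  have hk0 : (0 : ℕ) < k := hk
  have hkR0 : ((k : ℝ≥0∞)) ≠ 0 := by exact_mod_cast Nat.pos_iff_ne_zero.1 hk0
  set d : ℝ≥0∞ := c / k with hd
  have hdT : d ≠ ⊤ := (ENNReal.div_lt_top hc hkR0).ne
  set a : ℕ → ℝ≥0∞ := fun i => (i : ℝ≥0∞) * d with ha
  have haT : ∀ i, a i ≠ ⊤ := fun i =>
    ENNReal.mul_ne_top (ENNReal.natCast_ne_top i) hdT
  have hak : a k = c := by
    rw [ha]
    exact ENNReal.mul_div_cancel hkR0 (ENNReal.natCast_ne_top k)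
  set F : ℕ → Set X := fun i => {x | a i ≤ ψ x} with hF
  have hFcl : ∀ i, IsClosed (F i) := fun i => isClosed_le continuous_const hψ
  have hFm : ∀ i, MeasurableSet (F i) := fun i => (hFcl i).measurableSet
  -- pointwise bound
  have hptw : ∀ n : ℕ, ∀ x, EReal.exp ((n : EReal) * (ψ x : EReal)) ≤
      ∑ i ∈ Finset.range k,
        (F i).indicator (fun _ => EReal.exp ((n : EReal) * ((a (i+1) : ℝ≥0∞) : EReal))) x := by
    intro n x
    set S := (Finset.range k).filter (fun i => a i ≤ ψ x) with hS
    have hS0 : 0 ∈ S := by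
      simp only [hS, Finset.mem_filter, Finset.mem_range]
      exact ⟨hk0, by simp [ha]⟩
    have hSne : S.Nonempty := ⟨0, hS0⟩
    set i₀ := S.max' hSne with hi₀
    have hi₀S : i₀ ∈ S := S.max'_mem hSne
    have hi₀k : i₀ < k := Finset.mem_range.1 (Finset.mem_filter.1 hi₀S).1
    have hi₀le : a i₀ ≤ ψ x := (Finset.mem_filter.1 hi₀S).2
    have hup : ψ x ≤ a (i₀ + 1) := by
      rcases eq_or_lt_of_le (Nat.succ_le_of_lt hi₀k) with he | hlt
      · have he' : i₀ + 1 = k := he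
        rw [he', hak]; exact hψc x
      · by_contra hcon
        rw [not_le] at hcon
        have : i₀ + 1 ∈ S := by
          simp only [hS, Finset.mem_filter, Finset.mem_range]
          exact ⟨hlt, hcon.le⟩
        have := S.le_max' _ this
        omega
    calc EReal.exp ((n : EReal) * (ψ x : EReal))
        ≤ EReal.exp ((n : EReal) * ((a (i₀+1) : ℝ≥0∞) : EReal)) := by
          rw [EReal.exp_le_exp_iff]
          exact mul_le_mul_of_nonneg_left
            (EReal.coe_ennreal_le_coe_ennreal_iff.2 hup) (aux_nat_nonneg n)
      _ = (F i₀).indicator (fun _ => EReal.exp ((n : EReal) * ((a (i₀+1) : ℝ≥0∞) : EReal))) x :=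
          (Set.indicator_of_mem (show x ∈ F i₀ from hi₀le)
            (fun _ => EReal.exp ((n : EReal) * ((a (i₀+1) : ℝ≥0∞) : EReal)))).symm
      _ ≤ _ := Finset.single_le_sum (f := fun i =>
            (F i).indicator (fun _ => EReal.exp ((n : EReal) * ((a (i+1) : ℝ≥0∞) : EReal))) x)
            (fun i _ => zero_le) (Finset.mem_range.2 hi₀k)
  -- integral bound
  have hint : ∀ n : ℕ, (∫⁻ x, EReal.exp ((n : EReal) * (ψ x : EReal)) ∂ μ n) ≤
      ∑ i ∈ Finset.range k, EReal.exp ((n : EReal) * ((a (i+1) : ℝ≥0∞) : EReal)) * μ n (F i) := by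
    intro n
    refine (lintegral_mono (hptw n)).trans ?_
    rw [lintegral_finset_sum _ (fun i _ => Measurable.indicator measurable_const (hFm i))]
    exact le_of_eq (Finset.sum_congr rfl fun i _ => lintegral_indicator_const (hFm i) _)
  set T : ℕ → ℕ → ℝ≥0∞ := fun i n => EReal.exp ((n : EReal) * ((a (i+1) : ℝ≥0∞) : EReal)) * μ n (F i)
    with hT
  -- pointwise log bound
  have hmax : ∀ n : ℕ, ((n : ℝ)⁻¹ : EReal) *
      ENNReal.log (∫⁻ x, EReal.exp ((n : EReal) * (ψ x : EReal)) ∂ μ n) ≤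
      ((n : ℝ)⁻¹ : EReal) * ENNReal.log (k : ℝ≥0∞) +
        (Finset.range k).sup (fun i => ((n : ℝ)⁻¹ : EReal) * ENNReal.log (T i n)) := by
    intro n
    have h1 : (∫⁻ x, EReal.exp ((n : EReal) * (ψ x : EReal)) ∂ μ n) ≤
        (k : ℝ≥0∞) * (Finset.range k).sup (fun i => T i n) := by
      refine (hint n).trans ?_
      have := Finset.sum_le_card_nsmul (Finset.range k) (fun i => T i n)
        ((Finset.range k).sup (fun i => T i n))
        (fun i hi => Finset.le_sup (f := fun i => T i n) hi)
      simpa [Finset.card_range, nsmul_eq_mul] using this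
    have h2 : ENNReal.log (∫⁻ x, EReal.exp ((n : EReal) * (ψ x : EReal)) ∂ μ n) ≤
        ENNReal.log (k : ℝ≥0∞) + ENNReal.log ((Finset.range k).sup (fun i => T i n)) := by
      rw [← ENNReal.log_mul_add]
      exact ENNReal.log_monotone h1
    calc ((n : ℝ)⁻¹ : EReal) *
        ENNReal.log (∫⁻ x, EReal.exp ((n : EReal) * (ψ x : EReal)) ∂ μ n)
        ≤ ((n : ℝ)⁻¹ : EReal) * (ENNReal.log (k : ℝ≥0∞) +
            ENNReal.log ((Finset.range k).sup (fun i => T i n))) :=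
          mul_le_mul_of_nonneg_left h2 (sc_nonneg n)
      _ = ((n : ℝ)⁻¹ : EReal) * ENNReal.log (k : ℝ≥0∞) +
          ((n : ℝ)⁻¹ : EReal) * ENNReal.log ((Finset.range k).sup (fun i => T i n)) :=
          coe_mul_add_of_nonneg (by positivity) _ _
      _ ≤ _ := by
          refine add_le_add_right ?_ _
          obtain ⟨i1, hi1, hEq⟩ := Finset.exists_mem_eq_sup (Finset.range k)
            ⟨0, Finset.mem_range.2 hk0⟩ (fun i => T i n)
          rw [hEq]
          exact Finset.le_sup (f := fun i => ((n : ℝ)⁻¹ : EReal) * ENNReal.log (T i n)) hi1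
  -- per-index limsup bound
  have hperi : ∀ i ∈ Finset.range k,
      limsup (fun n : ℕ => ((n : ℝ)⁻¹ : EReal) * ENNReal.log (T i n)) atTop ≤
        ((c.toReal / k : ℝ) : EReal) := by
    intro i hi
    have hinf : ((a i : ℝ≥0∞) : EReal) ≤ ⨅ x ∈ F i, (J x : EReal) :=
      le_iInf₂ fun x hx => EReal.coe_ennreal_le_coe_ennreal_iff.2 ((hx : a i ≤ ψ x).trans (hψJ x))
    have hub' : limsup (fun n : ℕ => ((n : ℝ)⁻¹ : EReal) * ENNReal.log (μ n (F i))) atTop ≤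
        -((a i : ℝ≥0∞) : EReal) :=
      (hub (F i) (hFcl i)).trans (EReal.neg_le_neg_iff.2 hinf)
    have heq : ∀ᶠ n : ℕ in atTop, ((n : ℝ)⁻¹ : EReal) * ENNReal.log (T i n) =
        (((a (i+1)).toReal : ℝ) : EReal) + ((n : ℝ)⁻¹ : EReal) * ENNReal.log (μ n (F i)) := by
      filter_upwards [eventually_ge_atTop 1] with n hn
      rw [hT]
      simp only
      rw [ENNReal.log_mul_add, EReal.log_exp]
      rw [show ∀ x y : EReal, ((n : ℝ)⁻¹ : EReal) * (x + y) =
          ((n : ℝ)⁻¹ : EReal) * x + ((n : ℝ)⁻¹ : EReal) * y from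
        fun x y => coe_mul_add_of_nonneg (by positivity) x y]
      congr 1
      rw [aux_coe_ennreal _ (haT (i+1)), ← EReal.coe_coe_eq_natCast n, ← EReal.coe_inv,
        ← EReal.coe_mul, ← EReal.coe_mul]
      have hn0 : (n : ℝ) ≠ 0 := by positivity
      rw [EReal.coe_eq_coe_iff]
      field_simp
    calc limsup (fun n : ℕ => ((n : ℝ)⁻¹ : EReal) * ENNReal.log (T i n)) atTop
        = limsup (fun n : ℕ => (((a (i+1)).toReal : ℝ) : EReal) +
            ((n : ℝ)⁻¹ : EReal) * ENNReal.log (μ n (F i))) atTop := limsup_congr heq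
      _ ≤ (((a (i+1)).toReal : ℝ) : EReal) +
          limsup (fun n : ℕ => ((n : ℝ)⁻¹ : EReal) * ENNReal.log (μ n (F i))) atTop :=
          aux_limsup_const_add _ (EReal.coe_ne_bot _) (EReal.coe_ne_top _) _
      _ ≤ (((a (i+1)).toReal : ℝ) : EReal) + -((a i : ℝ≥0∞) : EReal) := add_le_add_right hub' _
      _ = (((a (i+1)).toReal - (a i).toReal : ℝ) : EReal) := by
          rw [aux_coe_ennreal _ (haT i), ← EReal.coe_neg, ← EReal.coe_add, sub_eq_add_neg]
      _ = ((c.toReal / k : ℝ) : EReal) := by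
          rw [EReal.coe_eq_coe_iff]
          have h1 : ∀ j : ℕ, (a j).toReal = (j : ℝ) * d.toReal := by
            intro j
            rw [ha]
            simp [ENNReal.toReal_mul]
          rw [h1, h1, hd, ENNReal.toReal_div, ENNReal.toReal_natCast]
          push_cast
          ring
  -- assemble
  refine (limsup_le_limsup (Eventually.of_forall hmax)).trans ?_
  have hlogk : limsup (fun n : ℕ => ((n : ℝ)⁻¹ : EReal) * ENNReal.log (k : ℝ≥0∞)) atTop = 0 :=
    aux_limsup_log _ hkR0 (ENNReal.natCast_ne_top k)
  refine (EReal.limsup_add_le ?_ ?_).trans ?_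
  · rw [hlogk]; exact .inl (by simp)
  · rw [hlogk]; exact .inl (by simp)
  rw [hlogk, zero_add, limsup_finset_sup]
  exact Finset.sup_le hperi


/-- Varadhan upper bound for the truncated function, given a real bound `b` on
`φ ∧ M - J`. -/
lemma trunc_limsup_le {X : Type*} [TopologicalSpace X] [MeasurableSpace X] [BorelSpace X]
    (μ : ℕ → Measure X) (J : X → ℝ≥0∞) (hJc : Continuous J)
    (hub : ∀ F : Set X, IsClosed F →
      Filter.limsup (fun n : ℕ => ((n : ℝ)⁻¹ : EReal) * ENNReal.log (μ n F)) Filter.atTop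
        ≤ -(⨅ x ∈ F, (J x : EReal)))
    (φ : X → EReal) (M b : ℝ)
    (hb : ∀ x, (φ x ⊓ (M : EReal)) - (J x : EReal) ≤ (b : EReal)) :
    limsup (fun n : ℕ => ((n : ℝ)⁻¹ : EReal) *
      ENNReal.log (∫⁻ x, EReal.exp ((n : EReal) * (φ x ⊓ (M : EReal))) ∂ μ n)) atTop
      ≤ (b : EReal) := by
  set c : ℝ≥0∞ := ENNReal.ofReal (M - b) with hcdef
  set ψ : X → ℝ≥0∞ := fun x => min (J x) c with hψdef
  have hψcont : Continuous ψ := hJc.min continuous_const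
  have hψJ : ∀ x, ψ x ≤ J x := fun x => min_le_left _ _
  have hψc : ∀ x, ψ x ≤ c := fun x => min_le_right _ _
  have hcT : c ≠ ⊤ := ENNReal.ofReal_ne_top
  -- pointwise bound φ ⊓ M ≤ b + ψ
  have hpt : ∀ x, φ x ⊓ (M : EReal) ≤ (b : EReal) + (ψ x : EReal) := by
    intro x
    rcases le_total (J x) c with h | h
    · have hJT : J x ≠ ⊤ := ne_top_of_le_ne_top hcT h
      rw [hψdef]
      simp only [min_eq_left h]
      have hcoe : (J x : EReal) = (((J x).toReal : ℝ) : EReal) := aux_coe_ennreal _ hJT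
      have hb' := hb x
      rw [hcoe] at hb' ⊢
      have h2 : φ x ⊓ (M : EReal) - (((J x).toReal : ℝ) : EReal) + (((J x).toReal : ℝ) : EReal)
          ≤ (b : EReal) + (((J x).toReal : ℝ) : EReal) := add_le_add_left hb' _
      rwa [EReal.sub_add_cancel] at h2
    · rw [hψdef]
      simp only [min_eq_right h]
      have hcoe : (c : EReal) = ((max (M - b) 0 : ℝ) : EReal) := by
        rw [hcdef, EReal.coe_ennreal_ofReal]
      rw [hcoe, ← EReal.coe_add]
      refine inf_le_right.trans (EReal.coe_le_coe_iff.2 ?_)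
      rcases le_total (M - b) 0 with h' | h'
      · rw [max_eq_right h']; linarith
      · rw [max_eq_left h']; linarith
  -- integral bound
  have hint : ∀ n : ℕ, (∫⁻ x, EReal.exp ((n : EReal) * (φ x ⊓ (M : EReal))) ∂ μ n) ≤
      EReal.exp (((n : ℝ) * b : ℝ) : EReal) *
        ∫⁻ x, EReal.exp ((n : EReal) * (ψ x : EReal)) ∂ μ n := by
    intro n
    rw [← lintegral_const_mul' _ _ (fun h => EReal.coe_ne_top _ (EReal.exp_eq_top_iff.1 h))]
    refine lintegral_mono fun x => ?_
    rw [← EReal.exp_add]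
    rw [EReal.exp_le_exp_iff]
    calc (n : EReal) * (φ x ⊓ (M : EReal)) ≤ (n : EReal) * ((b : EReal) + (ψ x : EReal)) :=
          mul_le_mul_of_nonneg_left (hpt x) (aux_nat_nonneg n)
      _ = (n : EReal) * (b : EReal) + (n : EReal) * (ψ x : EReal) := by
          rw [← EReal.coe_coe_eq_natCast n]
          exact coe_mul_add_of_nonneg (Nat.cast_nonneg n) _ _
      _ = (((n : ℝ) * b : ℝ) : EReal) + (n : EReal) * (ψ x : EReal) := by
          rw [← EReal.coe_coe_eq_natCast n, ← EReal.coe_mul]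
  -- log bound, eventually in n
  have hlog : ∀ᶠ n : ℕ in atTop, ((n : ℝ)⁻¹ : EReal) *
      ENNReal.log (∫⁻ x, EReal.exp ((n : EReal) * (φ x ⊓ (M : EReal))) ∂ μ n) ≤
      (b : EReal) + ((n : ℝ)⁻¹ : EReal) *
        ENNReal.log (∫⁻ x, EReal.exp ((n : EReal) * (ψ x : EReal)) ∂ μ n) := by
    filter_upwards [eventually_ge_atTop 1] with n hn
    have h1 := mul_le_mul_of_nonneg_left (ENNReal.log_monotone (hint n)) (sc_nonneg n)
    refine h1.trans ?_
    rw [ENNReal.log_mul_add, EReal.log_exp]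
    rw [show ∀ x y : EReal, ((n : ℝ)⁻¹ : EReal) * (x + y) =
        ((n : ℝ)⁻¹ : EReal) * x + ((n : ℝ)⁻¹ : EReal) * y from
      fun x y => coe_mul_add_of_nonneg (by positivity) x y]
    refine add_le_add_left (le_of_eq ?_) _
    rw [← EReal.coe_inv, ← EReal.coe_mul, EReal.coe_eq_coe_iff]
    have hn0 : (n : ℝ) ≠ 0 := by positivity
    field_simp
  -- conclude
  refine (limsup_le_limsup hlog).trans ?_
  refine (aux_limsup_const_add _ (EReal.coe_ne_bot _) (EReal.coe_ne_top _) _).trans ?_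
  have h0 := psi_limsup_le_zero μ J hub ψ hψcont hψJ c hcT hψc
  calc (b : EReal) + limsup (fun n : ℕ => ((n : ℝ)⁻¹ : EReal) *
        ENNReal.log (∫⁻ x, EReal.exp ((n : EReal) * (ψ x : EReal)) ∂ μ n)) atTop
      ≤ (b : EReal) + 0 := add_le_add_right h0 _
    _ = (b : EReal) := add_zero _

/-- The truncated Varadhan upper bound with the supremum. -/
lemma trunc_limsup_le_sup {X : Type*} [TopologicalSpace X] [MeasurableSpace X] [BorelSpace X]
    (μ : ℕ → Measure X) (J : X → ℝ≥0∞) (hJc : Continuous J)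
    (hub : ∀ F : Set X, IsClosed F →
      Filter.limsup (fun n : ℕ => ((n : ℝ)⁻¹ : EReal) * ENNReal.log (μ n F)) Filter.atTop
        ≤ -(⨅ x ∈ F, (J x : EReal)))
    (φ : X → EReal) (M : ℝ) :
    limsup (fun n : ℕ => ((n : ℝ)⁻¹ : EReal) *
      ENNReal.log (∫⁻ x, EReal.exp ((n : EReal) * (φ x ⊓ (M : EReal))) ∂ μ n)) atTop
      ≤ ⨆ x, (φ x ⊓ (M : EReal)) - (J x : EReal) := by
  by_contra hcon
  rw [not_le] at hcon
  obtain ⟨b, hb1, hb2⟩ := EReal.exists_between_coe_real hcon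
  have hb : ∀ x, (φ x ⊓ (M : EReal)) - (J x : EReal) ≤ (b : EReal) :=
    fun x => (le_iSup (fun x => (φ x ⊓ (M : EReal)) - (J x : EReal)) x).trans hb1.le
  exact absurd ((trunc_limsup_le μ J hJc hub φ M b hb).trans_lt hb2) (lt_irrefl _)


end VaradhanAux

open VaradhanAux

/-- Main lemma under condition 1 (continuous rate function): for a Borel measurable
extended-real integrand `φ`, the generalized Varadhan upper bound holds iff the tail
condition holds. -/
theorem varadhan_upper_iff_tail_of_continuous_rate
    {X : Type*} [TopologicalSpace X] [MeasurableSpace X] [BorelSpace X]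
    (μ : ℕ → Measure X) [∀ n, IsProbabilityMeasure (μ n)]
    (J : X → ℝ≥0∞) (hJ : LowerSemicontinuous J) (hJc : Continuous J)
    (hub : ∀ F : Set X, IsClosed F →
      Filter.limsup (fun n : ℕ => ((n : ℝ)⁻¹ : EReal) * ENNReal.log (μ n F)) Filter.atTop
        ≤ -(⨅ x ∈ F, (J x : EReal)))
    (hlb : ∀ G : Set X, IsOpen G →
      -(⨅ x ∈ G, (J x : EReal)) ≤
        Filter.liminf (fun n : ℕ => ((n : ℝ)⁻¹ : EReal) * ENNReal.log (μ n G)) Filter.atTop)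
    (φ : X → EReal) (hφ : Measurable φ) :
    (Filter.limsup (fun n : ℕ => ((n : ℝ)⁻¹ : EReal) *
        ENNReal.log (∫⁻ x, EReal.exp ((n : EReal) * φ x) ∂ μ n)) Filter.atTop
      ≤ Filter.limsup (fun M : ℝ => ⨆ x, (φ x ⊓ (M : EReal)) - (J x : EReal)) Filter.atTop)
    ↔ (Filter.limsup (fun M : ℝ =>
        Filter.limsup (fun n : ℕ => ((n : ℝ)⁻¹ : EReal) *
          ENNReal.log (∫⁻ x in {x | (M : EReal) < φ x}, EReal.exp ((n : EReal) * φ x) ∂ μ n))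
          Filter.atTop) Filter.atTop
      ≤ Filter.limsup (fun M : ℝ => ⨆ x, (φ x ⊓ (M : EReal)) - (J x : EReal)) Filter.atTop) := by
  set B := Filter.limsup (fun M : ℝ => ⨆ x, (φ x ⊓ (M : EReal)) - (J x : EReal)) Filter.atTop
    with hB
  have hβleB : ∀ M : ℝ, (⨆ x, (φ x ⊓ (M : EReal)) - (J x : EReal)) ≤ B := by
    intro M
    refine le_limsup_of_frequently_le ?_
    refine ((eventually_ge_atTop M).mono fun M' hM' => ?_).frequently
    refine iSup_mono fun x => ?_
    exact EReal.sub_le_sub (inf_le_inf_left _ (EReal.coe_le_coe_iff.2 hM')) le_rfl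
  constructor
  · -- forward: tail bound from the main bound, trivially
    intro h
    refine limsup_le_of_le (by isBoundedDefault) (Eventually.of_forall fun M => ?_)
    refine (limsup_le_limsup (Eventually.of_forall fun n => ?_)).trans h
    exact mul_le_mul_of_nonneg_left
      (ENNReal.log_monotone (setLIntegral_le_lintegral _ _)) (sc_nonneg n)
  · -- backward
    intro htail
    by_contra hcon
    rw [not_le] at hcon
    set L := Filter.limsup (fun n : ℕ => ((n : ℝ)⁻¹ : EReal) *
        ENNReal.log (∫⁻ x, EReal.exp ((n : EReal) * φ x) ∂ μ n)) Filter.atTop with hLdef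
    have key : ∀ M : ℝ, L ≤ B ⊔ (Filter.limsup (fun n : ℕ => ((n : ℝ)⁻¹ : EReal) *
        ENNReal.log (∫⁻ x in {x | (M : EReal) < φ x}, EReal.exp ((n : EReal) * φ x) ∂ μ n))
        Filter.atTop) := by
      intro M
      have hs : MeasurableSet {x | (M : EReal) < φ x} := measurableSet_lt measurable_const hφ
      have hptn : ∀ n : ℕ, ((n : ℝ)⁻¹ : EReal) *
          ENNReal.log (∫⁻ x, EReal.exp ((n : EReal) * φ x) ∂ μ n) ≤
          ((n : ℝ)⁻¹ : EReal) * ENNReal.log 2 +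
          ((((n : ℝ)⁻¹ : EReal) *
              ENNReal.log (∫⁻ x, EReal.exp ((n : EReal) * (φ x ⊓ (M : EReal))) ∂ μ n)) ⊔
            (((n : ℝ)⁻¹ : EReal) *
              ENNReal.log (∫⁻ x in {x | (M : EReal) < φ x},
                EReal.exp ((n : EReal) * φ x) ∂ μ n))) := by
        intro n
        have hsplit : (∫⁻ x, EReal.exp ((n : EReal) * φ x) ∂ μ n) =
            (∫⁻ x in {x | (M : EReal) < φ x}, EReal.exp ((n : EReal) * φ x) ∂ μ n) +
            (∫⁻ x in {x | (M : EReal) < φ x}ᶜ, EReal.exp ((n : EReal) * φ x) ∂ μ n) :=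
          (lintegral_add_compl _ hs).symm
        have hcompl : (∫⁻ x in {x | (M : EReal) < φ x}ᶜ, EReal.exp ((n : EReal) * φ x) ∂ μ n) ≤
            ∫⁻ x, EReal.exp ((n : EReal) * (φ x ⊓ (M : EReal))) ∂ μ n := by
          have heq : (∫⁻ x in {x | (M : EReal) < φ x}ᶜ, EReal.exp ((n : EReal) * φ x) ∂ μ n) =
              (∫⁻ x in {x | (M : EReal) < φ x}ᶜ,
                EReal.exp ((n : EReal) * (φ x ⊓ (M : EReal))) ∂ μ n) := by
            refine setLIntegral_congr_fun hs.compl (fun x hx => ?_)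
            have hxM : φ x ≤ (M : EReal) := not_lt.1 hx
            rw [inf_eq_left.2 hxM]
          rw [heq]
          exact setLIntegral_le_lintegral _ _
        have h2 : (∫⁻ x, EReal.exp ((n : EReal) * φ x) ∂ μ n) ≤
            2 * ((∫⁻ x, EReal.exp ((n : EReal) * (φ x ⊓ (M : EReal))) ∂ μ n) ⊔
              (∫⁻ x in {x | (M : EReal) < φ x}, EReal.exp ((n : EReal) * φ x) ∂ μ n)) := by
          rw [hsplit, two_mul]
          exact add_le_add le_sup_right (hcompl.trans le_sup_left)
        calc ((n : ℝ)⁻¹ : EReal) * ENNReal.log (∫⁻ x, EReal.exp ((n : EReal) * φ x) ∂ μ n)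
            ≤ ((n : ℝ)⁻¹ : EReal) * (ENNReal.log 2 +
              ENNReal.log ((∫⁻ x, EReal.exp ((n : EReal) * (φ x ⊓ (M : EReal))) ∂ μ n) ⊔
                (∫⁻ x in {x | (M : EReal) < φ x}, EReal.exp ((n : EReal) * φ x) ∂ μ n))) :=
              mul_le_mul_of_nonneg_left
                (by rw [← ENNReal.log_mul_add]; exact ENNReal.log_monotone h2) (sc_nonneg n)
          _ = ((n : ℝ)⁻¹ : EReal) * ENNReal.log 2 + ((n : ℝ)⁻¹ : EReal) *
              ENNReal.log ((∫⁻ x, EReal.exp ((n : EReal) * (φ x ⊓ (M : EReal))) ∂ μ n) ⊔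
                (∫⁻ x in {x | (M : EReal) < φ x}, EReal.exp ((n : EReal) * φ x) ∂ μ n)) :=
              coe_mul_add_of_nonneg (by positivity) _ _
          _ ≤ _ := by
              refine add_le_add_right ?_ _
              rw [aux_log_sup]
              exact aux_mul_sup_le n _ _
      have hlog2 : limsup (fun n : ℕ => ((n : ℝ)⁻¹ : EReal) * ENNReal.log 2) atTop = 0 :=
        aux_limsup_log 2 (by norm_num) (by norm_num)
      calc L ≤ limsup (fun n : ℕ => ((n : ℝ)⁻¹ : EReal) * ENNReal.log 2 +
              ((((n : ℝ)⁻¹ : EReal) *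
                ENNReal.log (∫⁻ x, EReal.exp ((n : EReal) * (φ x ⊓ (M : EReal))) ∂ μ n)) ⊔
              (((n : ℝ)⁻¹ : EReal) *
                ENNReal.log (∫⁻ x in {x | (M : EReal) < φ x},
                  EReal.exp ((n : EReal) * φ x) ∂ μ n)))) atTop :=
            limsup_le_limsup (Eventually.of_forall hptn)
        _ ≤ limsup (fun n : ℕ => ((n : ℝ)⁻¹ : EReal) * ENNReal.log 2) atTop +
            limsup (fun n : ℕ =>
              ((((n : ℝ)⁻¹ : EReal) *
                ENNReal.log (∫⁻ x, EReal.exp ((n : EReal) * (φ x ⊓ (M : EReal))) ∂ μ n)) ⊔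
              (((n : ℝ)⁻¹ : EReal) *
                ENNReal.log (∫⁻ x in {x | (M : EReal) < φ x},
                  EReal.exp ((n : EReal) * φ x) ∂ μ n)))) atTop :=
            EReal.limsup_add_le (by rw [hlog2]; exact .inl (by simp))
              (by rw [hlog2]; exact .inl (by simp))
        _ = limsup (fun n : ℕ => ((n : ℝ)⁻¹ : EReal) *
                ENNReal.log (∫⁻ x, EReal.exp ((n : EReal) * (φ x ⊓ (M : EReal))) ∂ μ n)) atTop ⊔
            limsup (fun n : ℕ => ((n : ℝ)⁻¹ : EReal) *
                ENNReal.log (∫⁻ x in {x | (M : EReal) < φ x},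
                  EReal.exp ((n : EReal) * φ x) ∂ μ n)) atTop := by
            rw [hlog2, zero_add, limsup_max]
        _ ≤ _ :=
            sup_le_sup_right ((trunc_limsup_le_sup μ J hJc hub φ M).trans (hβleB M)) _
    have h2 : ∀ M : ℝ, L ≤ Filter.limsup (fun n : ℕ => ((n : ℝ)⁻¹ : EReal) *
        ENNReal.log (∫⁻ x in {x | (M : EReal) < φ x}, EReal.exp ((n : EReal) * φ x) ∂ μ n))
        Filter.atTop := by
      intro M
      rcases le_or_gt L (Filter.limsup (fun n : ℕ => ((n : ℝ)⁻¹ : EReal) *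
        ENNReal.log (∫⁻ x in {x | (M : EReal) < φ x}, EReal.exp ((n : EReal) * φ x) ∂ μ n))
        Filter.atTop) with h | h
      · exact h
      · exact absurd (key M) (not_le.2 (sup_lt_iff.2 ⟨hcon, h⟩))
    have h3 : L ≤ Filter.limsup (fun M : ℝ =>
        Filter.limsup (fun n : ℕ => ((n : ℝ)⁻¹ : EReal) *
          ENNReal.log (∫⁻ x in {x | (M : EReal) < φ x}, EReal.exp ((n : EReal) * φ x) ∂ μ n))
          Filter.atTop) Filter.atTop :=
      le_limsup_of_frequently_le (Frequently.of_forall h2)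
    exact absurd (h3.trans htail) (not_le.2 hcon)
end

section
/- Let X be a topological space and let (μ_n) be a sequence of Borel probability measures on X satisfying the large deviations principle with rate function J (lower semicontinuous, not assumed to have compact sublevel sets). Let φ : X → [−∞,∞] be a Borel measurable function, write φ_M = φ ∧ M for M ∈ ℝ, and assume that the superlevel set φ^{−1}([w,∞]) is closed for every w ∈ ℝ with w ≥ lim_{M→∞} sup_{x∈X} [φ_M(x) − J(x)]. Then limsup_{n→∞} (1/n) log ∫_X e^{n φ(x)} μ_n(dx) ≤ lim_{M→∞} sup_{x∈X} [φ_M(x) − J(x)] holds if and only if lim_{M→∞} limsup_{n→∞} (1/n) log ∫_X e^{n φ(x)} 1{φ(x) > M} μ_n(dx) ≤ lim_{M→∞} sup_{x∈X} [φ_M(x) − J(x)]. -/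
open MeasureTheory Filter Topology ENNReal

lemma ereal_mul_add (r : ℝ) (hr : 0 ≤ r) (a : ℝ) (b : EReal) :
    (r : EReal) * ((a : EReal) + b) = ((r * a : ℝ) : EReal) + (r : EReal) * b := by
  induction b with
  | bot =>
    rcases eq_or_lt_of_le hr with h0 | h0
    · simp [← h0]
    · rw [EReal.add_bot, EReal.coe_mul_bot_of_pos h0, EReal.add_bot]
  | coe b => norm_cast; ring
  | top =>
    rcases eq_or_lt_of_le hr with h0 | h0
    · simp [← h0]
    · rw [EReal.coe_add_top, EReal.coe_mul_top_of_pos h0, EReal.coe_add_top]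

lemma inv_smul_natmul (n : ℕ) (hn : 1 ≤ n) (c : ℝ) (b : EReal) :
    ((n : ℝ)⁻¹ : EReal) * ((n : EReal) * (c : EReal) + b)
      = (c : EReal) + ((n : ℝ)⁻¹ : EReal) * b := by
  have hn0 : (n : ℝ) ≠ 0 := Nat.cast_ne_zero.mpr (by omega)
  rw [← EReal.coe_coe_eq_natCast, ← EReal.coe_mul, ← EReal.coe_inv,
    ereal_mul_add _ (by positivity) _ b]
  congr 2
  field_simp

lemma limsup_inv_log_sum_le (m : ℕ) (a : ℕ → ℕ → ℝ≥0∞) (d : ℝ)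
    (h : ∀ i < m, Filter.limsup (fun n : ℕ => ((n : ℝ)⁻¹ : EReal) * ENNReal.log (a i n))
        Filter.atTop ≤ (d : EReal)) :
    Filter.limsup (fun n : ℕ => ((n : ℝ)⁻¹ : EReal) *
        ENNReal.log (∑ i ∈ Finset.range m, a i n)) Filter.atTop ≤ (d : EReal) := by
  rcases Nat.eq_zero_or_pos m with rfl | hm
  · apply Filter.limsup_le_of_le (by isBoundedDefault)
    filter_upwards [eventually_ge_atTop 1] with n hn
    simp only [Finset.range_zero, Finset.sum_empty, ENNReal.log_zero]
    rw [← EReal.coe_inv, EReal.coe_mul_bot_of_pos (by positivity)]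
    exact bot_le
  refine EReal.le_of_forall_lt_iff_le.1 fun e he => ?_
  rw [EReal.coe_lt_coe_iff] at he
  set d' : ℝ := (d + e) / 2 with hd'
  have hdd' : (d : EReal) < (d' : EReal) := by
    rw [EReal.coe_lt_coe_iff]; simp only [hd']; linarith
  have hd'e : d' < e := by simp only [hd']; linarith
  set l : ℝ := (ENNReal.log (m : ℝ≥0∞)).toReal with hl
  have hlm : ENNReal.log (m : ℝ≥0∞) = (l : EReal) := by
    rw [hl, EReal.coe_toReal]
    · simp only [ne_eq, ENNReal.log_eq_top_iff]
      exact ENNReal.natCast_ne_top m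
    · simp only [ne_eq, ENNReal.log_eq_bot_iff]
      exact_mod_cast (by omega : ¬ (m = 0))
  have hall : ∀ᶠ n : ℕ in atTop, ∀ i ∈ Finset.range m,
      ((n : ℝ)⁻¹ : EReal) * ENNReal.log (a i n) < (d' : EReal) := by
    rw [Filter.eventually_all_finset]
    exact fun i hi =>
      eventually_lt_of_limsup_lt (lt_of_le_of_lt (h i (Finset.mem_range.1 hi)) hdd')
  have hsmall : ∀ᶠ n : ℕ in atTop, (n : ℝ)⁻¹ * l < e - d' := by
    have : Filter.Tendsto (fun n : ℕ => (n : ℝ)⁻¹ * l) atTop (nhds (0 * l)) :=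
      (tendsto_inv_atTop_nhds_zero_nat).mul tendsto_const_nhds
    rw [zero_mul] at this
    exact this.eventually_lt_const (by linarith)
  apply Filter.limsup_le_of_le (by isBoundedDefault)
  filter_upwards [eventually_ge_atTop 1, hall, hsmall] with n hn1 hn2 hn3
  have hn0 : (n : ℝ) ≠ 0 := Nat.cast_ne_zero.mpr (by omega)
  have key : ∀ i < m, a i n ≤ EReal.exp ((n : EReal) * (d' : EReal)) := by
    intro i hi
    have h1 : ENNReal.log (a i n) ≤ (n : EReal) * (d' : EReal) := by
      have := mul_le_mul_of_nonneg_left (le_of_lt (hn2 i (Finset.mem_range.2 hi)))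
        (by exact_mod_cast (by positivity : (0:ℝ) ≤ (n:ℝ)) : (0 : EReal) ≤ ((n:ℝ) : EReal))
      rw [← EReal.coe_inv, ← mul_assoc, ← EReal.coe_mul, mul_inv_cancel₀ hn0, EReal.coe_one,
        one_mul] at this
      rw [← EReal.coe_coe_eq_natCast]
      exact this
    calc a i n = EReal.exp (ENNReal.log (a i n)) := (ENNReal.exp_log _).symm
    _ ≤ _ := EReal.exp_monotone h1
  have hsum : (∑ i ∈ Finset.range m, a i n)
      ≤ (m : ℝ≥0∞) * EReal.exp ((n : EReal) * (d' : EReal)) := by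
    calc (∑ i ∈ Finset.range m, a i n)
        ≤ ∑ _i ∈ Finset.range m, EReal.exp ((n : EReal) * (d' : EReal)) :=
          Finset.sum_le_sum (fun i hi => key i (Finset.mem_range.1 hi))
      _ = _ := by rw [Finset.sum_const, Finset.card_range, nsmul_eq_mul]
  have hlog : ENNReal.log (∑ i ∈ Finset.range m, a i n)
      ≤ ((l + n * d' : ℝ) : EReal) := by
    calc ENNReal.log (∑ i ∈ Finset.range m, a i n)
        ≤ ENNReal.log ((m : ℝ≥0∞) * EReal.exp ((n : EReal) * (d' : EReal))) :=
          ENNReal.log_monotone hsum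
      _ = ENNReal.log (m : ℝ≥0∞) + (n : EReal) * (d' : EReal) := by
          rw [ENNReal.log_mul_add, EReal.log_exp]
      _ = ((l + n * d' : ℝ) : EReal) := by
          rw [hlm, ← EReal.coe_coe_eq_natCast, ← EReal.coe_mul, ← EReal.coe_add]
  calc ((n : ℝ)⁻¹ : EReal) * ENNReal.log (∑ i ∈ Finset.range m, a i n)
      ≤ ((n : ℝ)⁻¹ : EReal) * ((l + n * d' : ℝ) : EReal) :=
        mul_le_mul_of_nonneg_left hlog
          (by rw [← EReal.coe_inv]
              exact_mod_cast (by positivity : (0:ℝ) ≤ (n:ℝ)⁻¹))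
    _ = (((n:ℝ)⁻¹ * (l + n * d') : ℝ) : EReal) := by rw [← EReal.coe_inv, EReal.coe_mul]
    _ ≤ (e : EReal) := by
        rw [EReal.coe_le_coe_iff]
        have heq : (n:ℝ)⁻¹ * (l + n * d') = (n:ℝ)⁻¹ * l + d' := by field_simp
        rw [heq]; linarith

lemma cover_aux (t c ε M : ℝ) (hε : 0 < ε) (K : ℕ) (hK : 1 ≤ K) (hM : M ≤ c + K * ε)
    (h1 : c < t) (h2 : t ≤ M) :
    ∃ i < K, c + i * ε ≤ t ∧ t ≤ c + (i + 1) * ε := by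
  set i := min (⌊(t - c)/ε⌋₊) (K - 1) with hi
  have hiK : i < K := by omega
  refine ⟨i, hiK, ?_, ?_⟩
  · have h3 : (i : ℝ) ≤ (t - c)/ε := by
      refine le_trans ?_ (Nat.floor_le (by apply div_nonneg <;> linarith))
      exact_mod_cast min_le_left _ _
    have := (le_div_iff₀ hε).1 h3
    linarith
  · rcases le_or_gt (⌊(t - c)/ε⌋₊) (K - 1) with hf | hf
    · have hie : i = ⌊(t - c)/ε⌋₊ := min_eq_left hf
      have h4 : (t - c)/ε < (⌊(t - c)/ε⌋₊ : ℝ) + 1 := Nat.lt_floor_add_one _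
      rw [← hie] at h4
      have := (div_lt_iff₀ hε).1 h4
      linarith
    · have hie : i = K - 1 := min_eq_right (le_of_lt hf)
      have hiK1 : (i : ℝ) + 1 = (K : ℝ) := by
        have : i + 1 = K := by omega
        exact_mod_cast this
      rw [hiK1]
      linarith
/-- Main lemma under condition 2 (closed superlevel sets above the limiting value): for a
Borel measurable extended-real integrand `φ`, the generalized Varadhan upper bound holds
iff the tail condition holds. -/
theorem varadhan_upper_iff_tail_of_closed_superlevels
    {X : Type*} [TopologicalSpace X] [MeasurableSpace X] [BorelSpace X]
    (μ : ℕ → Measure X) [∀ n, IsProbabilityMeasure (μ n)]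
    (J : X → ℝ≥0∞) (hJ : LowerSemicontinuous J)
    (hub : ∀ F : Set X, IsClosed F →
      Filter.limsup (fun n : ℕ => ((n : ℝ)⁻¹ : EReal) * ENNReal.log (μ n F)) Filter.atTop
        ≤ -(⨅ x ∈ F, (J x : EReal)))
    (hlb : ∀ G : Set X, IsOpen G →
      -(⨅ x ∈ G, (J x : EReal)) ≤
        Filter.liminf (fun n : ℕ => ((n : ℝ)⁻¹ : EReal) * ENNReal.log (μ n G)) Filter.atTop)
    (φ : X → EReal) (hφ : Measurable φ)
    (hlevel : ∀ w : ℝ,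
      Filter.limsup (fun M : ℝ => ⨆ x, (φ x ⊓ (M : EReal)) - (J x : EReal)) Filter.atTop
        ≤ (w : EReal) → IsClosed {x | (w : EReal) ≤ φ x}) :
    (Filter.limsup (fun n : ℕ => ((n : ℝ)⁻¹ : EReal) *
        ENNReal.log (∫⁻ x, EReal.exp ((n : EReal) * φ x) ∂ μ n)) Filter.atTop
      ≤ Filter.limsup (fun M : ℝ => ⨆ x, (φ x ⊓ (M : EReal)) - (J x : EReal)) Filter.atTop)
    ↔ (Filter.limsup (fun M : ℝ =>
        Filter.limsup (fun n : ℕ => ((n : ℝ)⁻¹ : EReal) *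
          ENNReal.log (∫⁻ x in {x | (M : EReal) < φ x}, EReal.exp ((n : EReal) * φ x) ∂ μ n))
          Filter.atTop) Filter.atTop
      ≤ Filter.limsup (fun M : ℝ => ⨆ x, (φ x ⊓ (M : EReal)) - (J x : EReal)) Filter.atTop) := by
  have hinv_nonneg : ∀ n : ℕ, (0 : EReal) ≤ ((n : ℝ)⁻¹ : EReal) := by
    intro n
    rw [← EReal.coe_inv]
    exact_mod_cast inv_nonneg.2 (Nat.cast_nonneg n)
  constructor
  · -- forward: easy direction
    intro H
    apply Filter.limsup_le_of_le (by isBoundedDefault)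
    apply Filter.Eventually.of_forall
    intro M
    refine le_trans ?_ H
    refine Filter.limsup_le_limsup (Filter.Eventually.of_forall fun n => ?_)
    exact mul_le_mul_of_nonneg_left
      (ENNReal.log_monotone (setLIntegral_le_lintegral _ _)) (hinv_nonneg n)
  · -- backward: hard direction
    intro T
    set S : ℝ → EReal := fun M => ⨆ x, (φ x ⊓ (M : EReal)) - (J x : EReal) with hSdef
    refine EReal.le_of_forall_lt_iff_le.1 fun D hD => ?_
    obtain ⟨c, hβc, hcD'⟩ := EReal.lt_iff_exists_real_btwn.1 hD
    have hcD : c < D := EReal.coe_lt_coe_iff.1 hcD'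
    set ε : ℝ := D - c with hεdef
    have hε : 0 < ε := by simp only [hεdef]; linarith
    -- every S M is below the limsup
    have hSβ : ∀ M : ℝ, S M ≤ Filter.limsup S Filter.atTop := by
      intro M
      refine Filter.le_limsup_of_frequently_le ?_ (by isBoundedDefault)
      apply Filter.Eventually.frequently
      filter_upwards [eventually_ge_atTop M] with M' hM'
      refine iSup_mono fun x => EReal.sub_le_sub (inf_le_inf_left _ ?_) le_rfl
      exact EReal.coe_le_coe_iff.2 hM'
    -- choose the tail cutoff M
    have hTD : Filter.limsup (fun M : ℝ =>
        Filter.limsup (fun n : ℕ => ((n : ℝ)⁻¹ : EReal) *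
          ENNReal.log (∫⁻ x in {x | (M : EReal) < φ x}, EReal.exp ((n : EReal) * φ x) ∂ μ n))
          Filter.atTop) Filter.atTop < (D : EReal) :=
      lt_of_le_of_lt T (lt_trans hβc hcD')
    obtain ⟨M, hM⟩ := (Filter.eventually_lt_of_limsup_lt hTD).exists
    -- choose the number of discretization steps
    obtain ⟨K₀, hK₀⟩ := exists_nat_ge ((M - c)/ε)
    set K : ℕ := K₀ + 1 with hKdef
    have hK1 : 1 ≤ K := by omega
    have hMK : M ≤ c + K * ε := by
      have h1 : M - c ≤ K₀ * ε := (div_le_iff₀ hε).1 hK₀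
      have h2 : (K₀ : ℝ) ≤ (K : ℝ) := by exact_mod_cast Nat.le_succ K₀
      nlinarith
    set w : ℕ → ℝ := fun i => c + i * ε with hwdef
    set G : ℕ → Set X := fun i => {x | ((w i : ℝ) : EReal) ≤ φ x} with hGdef
    have hcw : ∀ i : ℕ, c ≤ w i := by
      intro i
      simp only [hwdef]
      nlinarith [Nat.cast_nonneg (α := ℝ) i]
    have hGclosed : ∀ i, IsClosed (G i) := by
      intro i
      refine hlevel (w i) (le_of_lt (lt_of_lt_of_le hβc ?_))
      exact EReal.coe_le_coe_iff.2 (hcw i)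
    have hGmeas : ∀ i, MeasurableSet (G i) := fun i => (hGclosed i).measurableSet
    have htailmeas : MeasurableSet {x | (M : EReal) < φ x} := hφ measurableSet_Ioi
    set a : ℕ → ℕ → ℝ≥0∞ := fun i n =>
      if i = 0 then EReal.exp ((n : EReal) * (c : EReal))
      else if i ≤ K then EReal.exp ((n : EReal) * ((w i : ℝ) : EReal)) * μ n (G (i - 1))
      else ∫⁻ x in {x | (M : EReal) < φ x}, EReal.exp ((n : EReal) * φ x) ∂ μ n with hadef
    have hncast : ∀ n : ℕ, (0 : EReal) ≤ (n : EReal) := by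
      intro n
      rw [← EReal.coe_coe_eq_natCast]
      exact_mod_cast Nat.cast_nonneg n
    -- the main integral bound
    have hbound : ∀ n : ℕ, (∫⁻ x, EReal.exp ((n : EReal) * φ x) ∂ μ n)
        ≤ ∑ i ∈ Finset.range (K + 2), a i n := by
      intro n
      have hpt : ∀ x, EReal.exp ((n : EReal) * φ x)
          ≤ EReal.exp ((n : EReal) * (c : EReal))
            + ((∑ i ∈ Finset.range K, (G i).indicator
                (fun _ => EReal.exp ((n : EReal) * ((w (i + 1) : ℝ) : EReal))) x)
              + ({x | (M : EReal) < φ x}).indicator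
                  (fun y => EReal.exp ((n : EReal) * φ y)) x) := by
        intro x
        by_cases h1 : φ x ≤ (c : EReal)
        · exact le_trans (EReal.exp_monotone (mul_le_mul_of_nonneg_left h1 (hncast n)))
            le_self_add
        by_cases h3 : (M : EReal) < φ x
        · calc EReal.exp ((n : EReal) * φ x)
              = ({x | (M : EReal) < φ x}).indicator
                  (fun y => EReal.exp ((n : EReal) * φ y)) x :=
                (Set.indicator_of_mem (show x ∈ {x | (M : EReal) < φ x} from h3)
                  (fun y => EReal.exp ((n : EReal) * φ y))).symm
            _ ≤ (∑ i ∈ Finset.range K, (G i).indicator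
                  (fun _ => EReal.exp ((n : EReal) * ((w (i + 1) : ℝ) : EReal))) x)
                + ({x | (M : EReal) < φ x}).indicator
                    (fun y => EReal.exp ((n : EReal) * φ y)) x := le_add_self
            _ ≤ _ := le_add_self
        · push_neg at h1 h3
          have hxt : φ x ≠ ⊤ := ne_top_of_le_ne_top (EReal.coe_ne_top M) h3
          have hxb : φ x ≠ ⊥ := ne_bot_of_gt h1
          set t : ℝ := (φ x).toReal with htdef
          have hφx : φ x = (t : EReal) := (EReal.coe_toReal hxt hxb).symm
          have hct : c < t := by
            rw [hφx] at h1; exact EReal.coe_lt_coe_iff.1 h1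
          have htM : t ≤ M := by
            rw [hφx] at h3; exact EReal.coe_le_coe_iff.1 h3
          obtain ⟨i, hiK, hlo, hhi⟩ := cover_aux t c ε M hε K hK1 hMK hct htM
          have hxG : x ∈ G i := by
            simp only [hGdef, hwdef, Set.mem_setOf_eq, hφx]
            exact_mod_cast hlo
          have hφw : φ x ≤ ((w (i + 1) : ℝ) : EReal) := by
            rw [hφx]
            refine EReal.coe_le_coe_iff.2 ?_
            simp only [hwdef]
            push_cast
            linarith
          calc EReal.exp ((n : EReal) * φ x)
              ≤ EReal.exp ((n : EReal) * ((w (i + 1) : ℝ) : EReal)) :=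
                EReal.exp_monotone (mul_le_mul_of_nonneg_left hφw (hncast n))
            _ = (G i).indicator
                  (fun _ => EReal.exp ((n : EReal) * ((w (i + 1) : ℝ) : EReal))) x :=
                (Set.indicator_of_mem hxG
                  (fun _ => EReal.exp ((n : EReal) * ((w (i + 1) : ℝ) : EReal)))).symm
            _ ≤ ∑ j ∈ Finset.range K, (G j).indicator
                  (fun _ => EReal.exp ((n : EReal) * ((w (j + 1) : ℝ) : EReal))) x :=
                Finset.single_le_sum (f := fun j => (G j).indicator
                    (fun _ => EReal.exp ((n : EReal) * ((w (j + 1) : ℝ) : EReal))) x)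
                  (fun j _ => zero_le) (Finset.mem_range.2 hiK)
            _ ≤ (∑ j ∈ Finset.range K, (G j).indicator
                  (fun _ => EReal.exp ((n : EReal) * ((w (j + 1) : ℝ) : EReal))) x)
                + ({x | (M : EReal) < φ x}).indicator
                    (fun y => EReal.exp ((n : EReal) * φ y)) x := le_self_add
            _ ≤ _ := le_add_self
      calc (∫⁻ x, EReal.exp ((n : EReal) * φ x) ∂ μ n)
          ≤ ∫⁻ x, (EReal.exp ((n : EReal) * (c : EReal))
            + ((∑ i ∈ Finset.range K, (G i).indicator
                (fun _ => EReal.exp ((n : EReal) * ((w (i + 1) : ℝ) : EReal))) x)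
              + ({x | (M : EReal) < φ x}).indicator
                  (fun y => EReal.exp ((n : EReal) * φ y)) x)) ∂ μ n := lintegral_mono hpt
        _ = ∑ i ∈ Finset.range (K + 2), a i n := by
            rw [lintegral_add_left measurable_const]
            rw [lintegral_const, measure_univ, mul_one]
            rw [lintegral_add_left (Finset.measurable_sum _
              (fun i _ => measurable_const.indicator (hGmeas i)))]
            rw [lintegral_finset_sum _ (fun i _ => measurable_const.indicator (hGmeas i))]
            rw [lintegral_indicator htailmeas]
            simp_rw [lintegral_indicator (hGmeas _), setLIntegral_const]
            conv_rhs => rw [Finset.sum_range_succ, Finset.sum_range_succ']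
            have ha0 : a 0 n = EReal.exp ((n : EReal) * (c : EReal)) := by
              simp [hadef]
            have haK1 : a (K + 1) n
                = ∫⁻ x in {x | (M : EReal) < φ x}, EReal.exp ((n : EReal) * φ x) ∂ μ n := by
              simp only [hadef]
              rw [if_neg (by omega), if_neg (by omega)]
            have hmid : ∀ i ∈ Finset.range K, a (i + 1) n
                = EReal.exp ((n : EReal) * ((w (i + 1) : ℝ) : EReal)) * μ n (G i) := by
              intro i hi
              rw [Finset.mem_range] at hi
              simp only [hadef]
              rw [if_neg (by omega), if_pos (by omega)]
              simp
            rw [Finset.sum_congr rfl hmid, ha0, haK1]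
            ac_rfl
    -- conclude
    refine le_trans (Filter.limsup_le_limsup (Filter.Eventually.of_forall fun n =>
      mul_le_mul_of_nonneg_left (ENNReal.log_monotone (hbound n)) (hinv_nonneg n))) ?_
    refine limsup_inv_log_sum_le (K + 2) a D ?_
    intro i hi
    by_cases hi0 : i = 0
    · subst hi0
      have haeq : ∀ n : ℕ, a 0 n = EReal.exp ((n : EReal) * (c : EReal)) := fun n => by
        simp [hadef]
      apply Filter.limsup_le_of_le (by isBoundedDefault)
      filter_upwards [eventually_ge_atTop 1] with n hn
      rw [haeq n, EReal.log_exp]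
      have hn0 : (n : ℝ) ≠ 0 := Nat.cast_ne_zero.mpr (by omega)
      rw [← EReal.coe_coe_eq_natCast, ← EReal.coe_inv, ← EReal.coe_mul, ← EReal.coe_mul]
      rw [EReal.coe_le_coe_iff]
      have heq : (n : ℝ)⁻¹ * ((n : ℝ) * c) = c := by field_simp
      rw [heq]
      linarith
    by_cases hiK : i ≤ K
    · have hi1 : 1 ≤ i := by omega
      have haeq : ∀ n : ℕ, a i n
          = EReal.exp ((n : EReal) * ((w i : ℝ) : EReal)) * μ n (G (i - 1)) := fun n => by
        simp only [hadef]
        rw [if_neg hi0, if_pos hiK]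
      have hcong : ∀ᶠ n : ℕ in atTop, ((n : ℝ)⁻¹ : EReal) * ENNReal.log (a i n)
          = ((w i : ℝ) : EReal)
            + ((n : ℝ)⁻¹ : EReal) * ENNReal.log (μ n (G (i - 1))) := by
        filter_upwards [eventually_ge_atTop 1] with n hn
        rw [haeq n, ENNReal.log_mul_add, EReal.log_exp, inv_smul_natmul n hn]
      rw [Filter.limsup_congr hcong]
      have hadd : Filter.limsup (fun n : ℕ => ((w i : ℝ) : EReal)
            + ((n : ℝ)⁻¹ : EReal) * ENNReal.log (μ n (G (i - 1)))) Filter.atTop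
          ≤ ((w i : ℝ) : EReal) + Filter.limsup (fun n : ℕ =>
            ((n : ℝ)⁻¹ : EReal) * ENNReal.log (μ n (G (i - 1)))) Filter.atTop := by
        have h1 := EReal.limsup_add_le (f := atTop) (u := fun _ : ℕ => ((w i : ℝ) : EReal))
          (v := fun n : ℕ => ((n : ℝ)⁻¹ : EReal) * ENNReal.log (μ n (G (i - 1)))) ?_ ?_
        · simpa [Filter.limsup_const, Pi.add_def] using h1
        · rw [Filter.limsup_const]; exact Or.inl (EReal.coe_ne_bot _)
        · rw [Filter.limsup_const]; exact Or.inl (EReal.coe_ne_top _)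
      refine le_trans hadd ?_
      refine le_trans (add_le_add_right (hub (G (i - 1)) (hGclosed (i - 1))) _) ?_
      set q : EReal := ⨅ x ∈ G (i - 1), (J x : EReal) with hqdef
      have hwq : ((w (i - 1) : ℝ) : EReal) + (-q) ≤ Filter.limsup S Filter.atTop := by
        rcases eq_or_ne q ⊤ with hq' | hq'
        · rw [hq']
          simp only [EReal.neg_top, EReal.add_bot]
          exact bot_le
        refine EReal.le_of_forall_lt_iff_le.1 fun z hz => ?_
        have hjq : ((w (i - 1) - z : ℝ) : EReal) ≤ q := by
          refine le_iInf₂ fun x hx => ?_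
          have hinf : (φ x ⊓ ((w (i - 1) : ℝ) : EReal)) = ((w (i - 1) : ℝ) : EReal) :=
            inf_eq_right.2 hx
          have hsup : ((w (i - 1) : ℝ) : EReal) - (J x : EReal) ≤ S (w (i - 1)) := by
            conv_lhs => rw [← hinf]
            exact le_iSup (fun y => (φ y ⊓ ((w (i - 1) : ℝ) : EReal)) - (J y : EReal)) x
          have hlt : ((w (i - 1) : ℝ) : EReal) - (J x : EReal) < (z : EReal) :=
            lt_of_le_of_lt (hsup.trans (hSβ _)) hz
          rcases eq_or_ne (J x : EReal) ⊤ with hJx | hJx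
          · rw [hJx]; exact le_top
          have hJb : (J x : EReal) ≠ ⊥ :=
            ne_bot_of_gt (lt_of_lt_of_le (EReal.bot_lt_zero) (EReal.coe_ennreal_nonneg _))
          have hJr : (J x : EReal) = (((J x : EReal).toReal : ℝ) : EReal) :=
            (EReal.coe_toReal hJx hJb).symm
          rw [hJr] at hlt ⊢
          rw [← EReal.coe_sub, EReal.coe_lt_coe_iff] at hlt
          exact EReal.coe_le_coe_iff.2 (by linarith)
        calc ((w (i - 1) : ℝ) : EReal) + (-q)
            = ((w (i - 1) : ℝ) : EReal) - q := (sub_eq_add_neg _ _).symm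
          _ ≤ ((w (i - 1) : ℝ) : EReal) - ((w (i - 1) - z : ℝ) : EReal) :=
            EReal.sub_le_sub le_rfl hjq
          _ = (z : EReal) := by
            rw [← EReal.coe_sub]
            exact congrArg Real.toEReal (by ring)
      have hwi : w i = w (i - 1) + ε := by
        simp only [hwdef]
        have hcast : ((i : ℕ) : ℝ) = ((i - 1 : ℕ) : ℝ) + 1 := by
          have h5 : (i - 1) + 1 = i := by omega
          calc ((i : ℕ) : ℝ) = (((i - 1) + 1 : ℕ) : ℝ) := by rw [h5]
          _ = ((i - 1 : ℕ) : ℝ) + 1 := by push_cast; ring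
        rw [hcast]; ring
      calc ((w i : ℝ) : EReal) + (-q)
          = (((w (i - 1) : ℝ) : EReal) + (-q)) + (ε : EReal) := by
            rw [hwi, EReal.coe_add, add_right_comm]
        _ ≤ Filter.limsup S Filter.atTop + (ε : EReal) := add_le_add_left hwq _
        _ ≤ (c : EReal) + (ε : EReal) := add_le_add_left (le_of_lt hβc) _
        _ ≤ (D : EReal) := by
            rw [← EReal.coe_add]
            exact EReal.coe_le_coe_iff.2 (by rw [hεdef]; linarith)
    · have hiK1 : i = K + 1 := by omega
      subst hiK1
      have haeq : (fun n : ℕ => ((n : ℝ)⁻¹ : EReal) * ENNReal.log (a (K + 1) n))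
          = (fun n : ℕ => ((n : ℝ)⁻¹ : EReal) * ENNReal.log
            (∫⁻ x in {x | (M : EReal) < φ x}, EReal.exp ((n : EReal) * φ x) ∂ μ n)) := by
        funext n
        simp only [hadef]
        rw [if_neg (by omega), if_neg (by omega)]
      rw [haeq]
      exact le_of_lt hM
end

section
/- Let X be a topological space and let (μ_n) be a sequence of Borel probability measures on X satisfying the large deviations principle with rate function J (lower semicontinuous, not assumed to have compact sublevel sets). Assume J is continuous. Let φ : X → [−∞,∞] be Borel measurable and write φ_M = φ ∧ M for M ∈ ℝ. Then for every b ∈ ℝ, limsup_{n→∞} (1/n) log ∫_X e^{n φ_b(x)} μ_n(dx) ≤ lim_{M→∞} sup_{x∈X} [φ_M(x) − J(x)]. -/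
open MeasureTheory Filter Topology ENNReal

section helpers

lemma my_distrib (r p : ℝ) (hr : 0 ≤ r) (q : EReal) :
    (r : EReal) * ((p : EReal) + q) = ((r * p : ℝ) : EReal) + (r : EReal) * q := by
  induction q using EReal.rec with
  | bot =>
    rcases eq_or_lt_of_le hr with h | h
    · simp [← h]
    · rw [EReal.add_bot, EReal.mul_bot_of_pos (by exact_mod_cast h), EReal.add_bot]
  | coe q => norm_cast; ring
  | top =>
    rcases eq_or_lt_of_le hr with h | h
    · simp [← h]
    · rw [EReal.add_top_of_ne_bot (by simp), EReal.mul_top_of_pos (by exact_mod_cast h),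
        EReal.add_top_of_ne_bot (EReal.coe_ne_bot _)]

lemma my_mul_max (r : EReal) (hr : 0 ≤ r) (x y : EReal) :
    r * max x y = max (r * x) (r * y) := by
  rcases le_total x y with h | h
  · rw [max_eq_right h, max_eq_right (mul_le_mul_of_nonneg_left h hr)]
  · rw [max_eq_left h, max_eq_left (mul_le_mul_of_nonneg_left h hr)]

/-- the exponential rate of a sequence in `ℝ≥0∞`. -/
noncomputable def myRate (u : ℕ → ℝ≥0∞) : EReal :=
  Filter.limsup (fun n : ℕ => (((n:ℝ)⁻¹ : ℝ) : EReal) * ENNReal.log (u n)) Filter.atTop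

lemma myRate_le_of_le {u : ℕ → ℝ≥0∞} {v : ℕ → ℝ≥0∞} (h : ∀ n, u n ≤ v n) :
    myRate u ≤ myRate v := by
  refine limsup_le_limsup (Eventually.of_forall fun n => ?_)
  exact mul_le_mul_of_nonneg_left (ENNReal.log_monotone (h n)) (EReal.coe_nonneg.2 (by positivity))

lemma myRate_zero : myRate (fun _ => 0) ≤ ⊥ := by
  refine limsup_le_of_le (by isBoundedDefault) ?_
  filter_upwards [eventually_ge_atTop 1] with n hn
  rw [ENNReal.log_zero, EReal.mul_bot_of_pos (EReal.coe_pos.2 (by positivity))]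

lemma myRate_add_le_max (u v : ℕ → ℝ≥0∞) :
    myRate (fun n => u n + v n) ≤ max (myRate u) (myRate v) := by
  have h2 : ENNReal.log 2 = ((Real.log 2 : ℝ) : EReal) := by
    rw [show (2:ℝ≥0∞) = ENNReal.ofReal 2 by simp, ENNReal.log_ofReal_of_pos (by norm_num)]
  have key : ∀ n : ℕ, (((n:ℝ)⁻¹ : ℝ) : EReal) * ENNReal.log (u n + v n) ≤
      (((n:ℝ)⁻¹ * Real.log 2 : ℝ) : EReal) +
        max ((((n:ℝ)⁻¹ : ℝ) : EReal) * ENNReal.log (u n)) ((((n:ℝ)⁻¹ : ℝ) : EReal) * ENNReal.log (v n)) := by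
    intro n
    have hle : u n + v n ≤ 2 * max (u n) (v n) := by
      rw [two_mul]
      exact add_le_add (le_max_left _ _) (le_max_right _ _)
    have hlog : ENNReal.log (u n + v n) ≤ ((Real.log 2 : ℝ) : EReal) +
        max (ENNReal.log (u n)) (ENNReal.log (v n)) := by
      calc ENNReal.log (u n + v n) ≤ ENNReal.log (2 * max (u n) (v n)) :=
            ENNReal.log_monotone hle
        _ = ENNReal.log 2 + ENNReal.log (max (u n) (v n)) := ENNReal.log_mul_add
        _ = ((Real.log 2 : ℝ) : EReal) + max (ENNReal.log (u n)) (ENNReal.log (v n)) := by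
            rw [h2, ENNReal.log_monotone.map_max]
    calc (((n:ℝ)⁻¹ : ℝ) : EReal) * ENNReal.log (u n + v n)
        ≤ (((n:ℝ)⁻¹ : ℝ) : EReal) * (((Real.log 2 : ℝ) : EReal) +
            max (ENNReal.log (u n)) (ENNReal.log (v n))) :=
          mul_le_mul_of_nonneg_left hlog (EReal.coe_nonneg.2 (by positivity))
      _ = (((n:ℝ)⁻¹ * Real.log 2 : ℝ) : EReal) +
            (((n:ℝ)⁻¹ : ℝ) : EReal) * max (ENNReal.log (u n)) (ENNReal.log (v n)) :=
          my_distrib _ _ (by positivity) _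
      _ = _ := by rw [my_mul_max _ (EReal.coe_nonneg.2 (by positivity))]
  have hlim0 : Filter.limsup (fun n : ℕ => (((n:ℝ)⁻¹ * Real.log 2 : ℝ) : EReal)) atTop = 0 := by
    have h0 : Tendsto (fun n : ℕ => ((n:ℝ)⁻¹ * Real.log 2 : ℝ)) atTop (nhds 0) := by
      simpa using tendsto_inv_atTop_nhds_zero_nat.mul_const (Real.log 2)
    have h1 : Tendsto (fun n : ℕ => (((n:ℝ)⁻¹ * Real.log 2 : ℝ) : EReal)) atTop
        (nhds ((0:ℝ) : EReal)) := (EReal.tendsto_coe).2 h0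
    rw [show (((0:ℝ)) : EReal) = (0:EReal) by simp] at h1
    exact h1.limsup_eq
  calc myRate (fun n => u n + v n)
      ≤ Filter.limsup (fun n : ℕ => (((n:ℝ)⁻¹ * Real.log 2 : ℝ) : EReal) +
          max ((((n:ℝ)⁻¹ : ℝ) : EReal) * ENNReal.log (u n)) ((((n:ℝ)⁻¹ : ℝ) : EReal) * ENNReal.log (v n)))
          atTop := limsup_le_limsup (Eventually.of_forall key)
    _ ≤ 0 + max (myRate u) (myRate v) := by
        refine le_trans (EReal.limsup_add_le ?_ ?_) ?_
        · rw [hlim0]; exact Or.inl (by simp)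
        · rw [hlim0]; exact Or.inl (by simp)
        · rw [hlim0, limsup_max]
          exact le_refl _
    _ = max (myRate u) (myRate v) := zero_add _

lemma myRate_sum_le (m : ℕ) (t : ℕ → ℕ → ℝ≥0∞) (av : EReal)
    (h : ∀ k < m, myRate (t k) ≤ av) :
    myRate (fun n => ∑ k ∈ Finset.range m, t k n) ≤ av := by
  induction m with
  | zero => simpa using le_trans myRate_zero bot_le
  | succ m ih =>
    have : (fun n => ∑ k ∈ Finset.range (m+1), t k n) =
        (fun n => (∑ k ∈ Finset.range m, t k n) + t m n) := by
      funext n; rw [Finset.sum_range_succ]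
    rw [this]
    refine le_trans (myRate_add_le_max _ _) (max_le ?_ ?_)
    · exact ih fun k hk => h k (hk.trans (Nat.lt_succ_self m))
    · exact h m (Nat.lt_succ_self m)

lemma myRate_exp_mul_le {X : Type*} [MeasurableSpace X] (μ : ℕ → Measure X) (a : ℝ) (s : Set X) :
    myRate (fun n => EReal.exp ((n : EReal) * (a : EReal)) * μ n s) ≤
      (a : EReal) +
        Filter.limsup (fun n : ℕ => (((n:ℝ)⁻¹ : ℝ) : EReal) * ENNReal.log (μ n s)) atTop := by
  have hev : (fun n : ℕ => (((n:ℝ)⁻¹:ℝ) : EReal) *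
        ENNReal.log (EReal.exp ((n : EReal) * (a : EReal)) * μ n s)) =ᶠ[atTop]
      (fun n : ℕ => (a : EReal) + (((n:ℝ)⁻¹:ℝ):EReal) * ENNReal.log (μ n s)) := by
    filter_upwards [eventually_ge_atTop 1] with n hn
    have hne : ((n:ℝ)) ≠ 0 := Nat.cast_ne_zero.2 (by omega)
    rw [ENNReal.log_mul_add, EReal.log_exp]
    have h1 : ((n : EReal) * (a:EReal)) = (((n:ℝ) * a : ℝ) : EReal) := by
      rw [EReal.coe_mul, EReal.coe_coe_eq_natCast]
    rw [h1, my_distrib _ _ (by positivity) _]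
    congr 2
    field_simp
  rw [myRate, limsup_congr hev]
  refine le_trans (EReal.limsup_add_le (u := fun _ => (a:EReal)) ?_ ?_) ?_
  · rw [limsup_const]; exact Or.inl (EReal.coe_ne_bot a)
  · rw [limsup_const]; exact Or.inl (EReal.coe_ne_top a)
  · rw [limsup_const]

end helpers

/-- Key step of the main lemma under condition 1 (continuous rate function): for every
real truncation level `b`, the upper bound holds for the truncated integrand `φ ∧ b`. -/
theorem varadhan_truncated_upper_of_continuous_rate
    {X : Type*} [TopologicalSpace X] [MeasurableSpace X] [BorelSpace X]
    (μ : ℕ → Measure X) [∀ n, IsProbabilityMeasure (μ n)]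
    (J : X → ℝ≥0∞) (hJ : LowerSemicontinuous J) (hJc : Continuous J)
    (hub : ∀ F : Set X, IsClosed F →
      Filter.limsup (fun n : ℕ => ((n : ℝ)⁻¹ : EReal) * ENNReal.log (μ n F)) Filter.atTop
        ≤ -(⨅ x ∈ F, (J x : EReal)))
    (hlb : ∀ G : Set X, IsOpen G →
      -(⨅ x ∈ G, (J x : EReal)) ≤
        Filter.liminf (fun n : ℕ => ((n : ℝ)⁻¹ : EReal) * ENNReal.log (μ n G)) Filter.atTop)
    (φ : X → EReal) (hφ : Measurable φ) (b : ℝ) :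
    Filter.limsup (fun n : ℕ => ((n : ℝ)⁻¹ : EReal) *
        ENNReal.log (∫⁻ x, EReal.exp ((n : EReal) * (φ x ⊓ (b : EReal))) ∂ μ n)) Filter.atTop
      ≤ Filter.limsup (fun M : ℝ => ⨆ x, (φ x ⊓ (M : EReal)) - (J x : EReal)) Filter.atTop := by
  classical
  have hA : (⨆ x, (φ x ⊓ (b:EReal)) - (J x : EReal)) ≤
      Filter.limsup (fun M : ℝ => ⨆ x, (φ x ⊓ (M : EReal)) - (J x : EReal)) Filter.atTop := by
    refine le_limsup_of_frequently_le ?_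
    refine ((eventually_ge_atTop b).mono fun M hM => ?_).frequently
    exact iSup_mono fun x =>
      EReal.sub_le_sub (inf_le_inf_left _ (EReal.coe_le_coe_iff.2 hM)) (le_refl _)
  refine le_trans ?_ hA
  refine EReal.le_of_forall_lt_iff_le.1 fun z hz => ?_
  obtain ⟨c, hc1, hc2⟩ := EReal.exists_between_coe_real hz
  set δ : ℝ := z - c with hδdef
  have hδ : 0 < δ := by
    have : c < z := EReal.coe_lt_coe_iff.1 hc2
    simp only [hδdef]; linarith
  have hψc : ∀ x, (φ x ⊓ (b:EReal)) ≤ (c : EReal) + (J x : EReal) := by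
    intro x
    have h1 : (φ x ⊓ (b:EReal)) - (J x : EReal) < (c:EReal) :=
      lt_of_le_of_lt (le_iSup (fun x => (φ x ⊓ (b:EReal)) - (J x : EReal)) x) hc1
    by_cases hJx : (J x : EReal) = ⊤
    · rw [hJx, EReal.add_top_of_ne_bot (EReal.coe_ne_bot c)]; exact le_top
    · exact le_of_lt ((EReal.sub_lt_iff (Or.inl (EReal.coe_ennreal_ne_bot _))
        (Or.inl hJx)).1 h1)
  obtain ⟨K, hK⟩ := exists_nat_ge ((b - c)/δ)
  have hbK : b - (K:ℝ)*δ ≤ c := by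
    have := (div_le_iff₀ hδ).1 hK
    linarith
  set G : ℕ → Set X := fun k =>
    if k < K then J ⁻¹' (Set.Icc (ENNReal.ofReal ((k:ℝ)*δ)) (ENNReal.ofReal (((k:ℝ)+1)*δ)))
    else if k = K then J ⁻¹' (Set.Ici (ENNReal.ofReal ((K:ℝ)*δ)))
    else ∅ with hGdef
  set av : ℕ → ℝ := fun k => if k < K then c + ((k:ℝ)+1)*δ else b with havdef
  have hGclosed : ∀ k, IsClosed (G k) := by
    intro k; simp only [hGdef]; split_ifs
    · exact isClosed_Icc.preimage hJc
    · exact isClosed_Ici.preimage hJc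
    · exact isClosed_empty
  have hU : (⋃ k, G k) = Set.univ := by
    refine Set.eq_univ_of_forall fun x => Set.mem_iUnion.2 ?_
    by_cases hx : ENNReal.ofReal ((K:ℝ)*δ) ≤ J x
    · refine ⟨K, ?_⟩
      simp only [hGdef]; rw [if_neg (lt_irrefl K)]; simpa using hx
    · push_neg at hx
      have hKpos : 0 < (K:ℝ)*δ := by
        by_contra h; push_neg at h
        rw [ENNReal.ofReal_eq_zero.2 h] at hx
        exact absurd hx (not_lt_of_ge zero_le)
      have hxt : J x ≠ ⊤ := ne_top_of_lt (hx.trans_le le_top)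
      set t : ℝ := (J x).toReal with htdef
      have ht0 : 0 ≤ t := ENNReal.toReal_nonneg
      have hJxeq : J x = ENNReal.ofReal t := (ENNReal.ofReal_toReal hxt).symm
      have htK : t < (K:ℝ)*δ := by
        rw [hJxeq] at hx
        exact (ENNReal.ofReal_lt_ofReal_iff hKpos).1 hx
      set k : ℕ := ⌊t/δ⌋₊ with hkdef
      have hfl : (k:ℝ) ≤ t/δ := Nat.floor_le (div_nonneg ht0 hδ.le)
      have hk1 : (k:ℝ)*δ ≤ t := by
        rw [← div_mul_cancel₀ t hδ.ne']
        exact mul_le_mul_of_nonneg_right hfl hδ.le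
      have hfl2 : t/δ < (k:ℝ)+1 := Nat.lt_floor_add_one _
      have hk2 : t ≤ ((k:ℝ)+1)*δ := by
        rw [← div_mul_cancel₀ t hδ.ne']
        exact (mul_lt_mul_of_pos_right hfl2 hδ).le
      have hkK : k < K := by
        have h' : (k:ℝ)*δ < (K:ℝ)*δ := lt_of_le_of_lt hk1 htK
        exact_mod_cast lt_of_mul_lt_mul_right h' hδ.le
      refine ⟨k, ?_⟩
      simp only [hGdef]; rw [if_pos hkK]
      refine ⟨?_, ?_⟩
      · rw [hJxeq]; exact ENNReal.ofReal_le_ofReal hk1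
      · rw [hJxeq]; exact ENNReal.ofReal_le_ofReal hk2
  have hψa : ∀ k, ∀ x ∈ G k, (φ x ⊓ (b:EReal)) ≤ (av k : EReal) := by
    intro k x hx
    simp only [hGdef] at hx
    simp only [havdef]
    split_ifs with h
    · rw [if_pos h] at hx
      have hup : (J x : EReal) ≤ ((((k:ℝ)+1)*δ : ℝ) : EReal) := by
        calc (J x : EReal) ≤ ((ENNReal.ofReal (((k:ℝ)+1)*δ)) : EReal) :=
              EReal.coe_ennreal_le_coe_ennreal_iff.2 hx.2
          _ = ((((k:ℝ)+1)*δ : ℝ) : EReal) := by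
              rw [EReal.coe_ennreal_ofReal, max_eq_left (by positivity)]
      calc (φ x ⊓ (b:EReal)) ≤ (c:EReal) + (J x:EReal) := hψc x
        _ ≤ (c:EReal) + ((((k:ℝ)+1)*δ : ℝ) : EReal) := add_le_add_right hup _
        _ = ((c + ((k:ℝ)+1)*δ : ℝ) : EReal) := by norm_cast
    · exact inf_le_right
  have hnn : ∀ n : ℕ, (0:EReal) ≤ (n : EReal) := fun n => by
    exact_mod_cast EReal.coe_nonneg.2 (Nat.cast_nonneg (α := ℝ) n)
  have hIb : ∀ n : ℕ, (∫⁻ x, EReal.exp ((n : EReal) * (φ x ⊓ (b : EReal))) ∂ μ n) ≤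
      ∑ k ∈ Finset.range (K+1), EReal.exp ((n : EReal) * (av k : EReal)) * μ n (G k) := by
    intro n
    have h1 : (∫⁻ x, EReal.exp ((n : EReal) * (φ x ⊓ (b : EReal))) ∂ μ n)
        = ∫⁻ x in ⋃ k, G k, EReal.exp ((n : EReal) * (φ x ⊓ (b : EReal))) ∂ μ n := by
      rw [hU, Measure.restrict_univ]
    rw [h1]
    refine le_trans (lintegral_iUnion_le _ _) ?_
    rw [tsum_eq_sum (s := Finset.range (K+1)) ?_]
    · refine Finset.sum_le_sum fun k hk => ?_
      calc ∫⁻ x in G k, EReal.exp ((n : EReal) * (φ x ⊓ (b : EReal))) ∂ μ n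
          ≤ ∫⁻ _x in G k, EReal.exp ((n : EReal) * (av k : EReal)) ∂ μ n := by
            refine setLIntegral_mono' (hGclosed k).measurableSet fun x hx => ?_
            exact EReal.exp_le_exp_iff.2 (mul_le_mul_of_nonneg_left (hψa k x hx) (hnn n))
        _ = EReal.exp ((n : EReal) * (av k : EReal)) * μ n (G k) := setLIntegral_const _ _
    · intro k hk
      have hk' : K < k := by
        by_contra h; push_neg at h
        exact hk (Finset.mem_range.2 (by omega))
      have hGe : G k = ∅ := by
        simp only [hGdef]; rw [if_neg (by omega), if_neg (by omega)]
      rw [hGe]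
      simp
  have hterm : ∀ k < K + 1,
      myRate (fun n => EReal.exp ((n : EReal) * (av k : EReal)) * μ n (G k))
        ≤ ((c + δ : ℝ) : EReal) := by
    intro k hk
    refine le_trans (myRate_exp_mul_le μ (av k) (G k)) ?_
    have hub' : Filter.limsup
        (fun n : ℕ => (((n:ℝ)⁻¹ : ℝ) : EReal) * ENNReal.log (μ n (G k))) Filter.atTop
          ≤ -(⨅ x ∈ G k, (J x : EReal)) := hub (G k) (hGclosed k)
    by_cases h : k < K
    · have hlow : (((k:ℝ)*δ : ℝ) : EReal) ≤ (⨅ x ∈ G k, (J x : EReal)) := by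
        refine le_iInf₂ fun x hx => ?_
        simp only [hGdef] at hx; rw [if_pos h] at hx
        calc (((k:ℝ)*δ : ℝ) : EReal) = ((ENNReal.ofReal ((k:ℝ)*δ)) : EReal) := by
              rw [EReal.coe_ennreal_ofReal, max_eq_left (by positivity)]
          _ ≤ (J x : EReal) := EReal.coe_ennreal_le_coe_ennreal_iff.2 hx.1
      calc (av k : EReal) + Filter.limsup
            (fun n : ℕ => (((n:ℝ)⁻¹ : ℝ) : EReal) * ENNReal.log (μ n (G k))) Filter.atTop
          ≤ (av k : EReal) + -(⨅ x ∈ G k, (J x : EReal)) := add_le_add_right hub' _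
        _ ≤ (av k : EReal) + -((((k:ℝ)*δ : ℝ) : EReal)) :=
            add_le_add_right (EReal.neg_le_neg_iff.2 hlow) _
        _ = ((av k - (k:ℝ)*δ : ℝ) : EReal) := by
            rw [← EReal.coe_neg, ← EReal.coe_add]; norm_num [sub_eq_add_neg]
        _ ≤ ((c + δ : ℝ) : EReal) := by
            refine EReal.coe_le_coe_iff.2 ?_
            simp only [havdef]; rw [if_pos h]; ring_nf; linarith
    · have hkK : k = K := by omega
      rw [hkK]
      have hub'' : Filter.limsup
          (fun n : ℕ => (((n:ℝ)⁻¹ : ℝ) : EReal) * ENNReal.log (μ n (G K))) Filter.atTop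
            ≤ -(⨅ x ∈ G K, (J x : EReal)) := hub (G K) (hGclosed K)
      have hlow : (((K:ℝ)*δ : ℝ) : EReal) ≤ (⨅ x ∈ G K, (J x : EReal)) := by
        refine le_iInf₂ fun x hx => ?_
        simp only [hGdef] at hx; rw [if_neg (lt_irrefl K)] at hx
        simp only [if_true, Set.mem_preimage, Set.mem_Ici] at hx
        calc (((K:ℝ)*δ : ℝ) : EReal) = ((ENNReal.ofReal ((K:ℝ)*δ)) : EReal) := by
              rw [EReal.coe_ennreal_ofReal, max_eq_left (by positivity)]
          _ ≤ (J x : EReal) := EReal.coe_ennreal_le_coe_ennreal_iff.2 hx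
      calc (av K : EReal) + Filter.limsup
            (fun n : ℕ => (((n:ℝ)⁻¹ : ℝ) : EReal) * ENNReal.log (μ n (G K))) Filter.atTop
          ≤ (av K : EReal) + -(⨅ x ∈ G K, (J x : EReal)) := add_le_add_right hub'' _
        _ ≤ (av K : EReal) + -((((K:ℝ)*δ : ℝ) : EReal)) :=
            add_le_add_right (EReal.neg_le_neg_iff.2 hlow) _
        _ = ((av K - (K:ℝ)*δ : ℝ) : EReal) := by
            rw [← EReal.coe_neg, ← EReal.coe_add]; norm_num [sub_eq_add_neg]
        _ ≤ ((c + δ : ℝ) : EReal) := by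
            refine EReal.coe_le_coe_iff.2 ?_
            simp only [havdef]; rw [if_neg (lt_irrefl K)]; linarith
  have hzeq : ((z:ℝ) : EReal) = ((c + δ : ℝ) : EReal) := by
    refine EReal.coe_eq_coe_iff.2 ?_
    simp only [hδdef]; ring
  rw [hzeq]
  refine le_trans (myRate_le_of_le hIb)
    (myRate_sum_le (K+1) (fun k n => EReal.exp ((n : EReal) * (av k : EReal)) * μ n (G k))
      _ hterm)
end

section
/- Let X be a topological space and let (μ_n) be a sequence of Borel probability measures on X satisfying the large deviations principle with rate function J (lower semicontinuous, not assumed to have compact sublevel sets). Let φ : X → [−∞,∞] be Borel measurable, write φ_M = φ ∧ M for M ∈ ℝ, and assume that the superlevel set φ^{−1}([w,∞]) is closed for every w ∈ ℝ with w ≥ lim_{M→∞} sup_{x∈X} [φ_M(x) − J(x)]. Then for every b ∈ ℝ, limsup_{n→∞} (1/n) log ∫_X e^{n φ_b(x)} μ_n(dx) ≤ lim_{M→∞} sup_{x∈X} [φ_M(x) − J(x)]. -/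
open MeasureTheory Filter Topology ENNReal

set_option linter.unusedVariables false

private lemma aux_mul_add (r x : ℝ) (hr : 0 < r) (y : EReal) :
    (r : EReal) * ((x : EReal) + y) = ((r * x : ℝ) : EReal) + (r : EReal) * y := by
  induction y with
  | bot => rw [EReal.add_bot, EReal.coe_mul_bot_of_pos hr, EReal.add_bot]
  | coe y => norm_cast; ring
  | top =>
      rw [EReal.add_top_of_ne_bot (EReal.coe_ne_bot x), EReal.coe_mul_top_of_pos hr,
        EReal.add_top_of_ne_bot (EReal.coe_ne_bot _)]

private lemma inv_natCast_nonneg (n : ℕ) : (0:EReal) ≤ ((n:ℝ)⁻¹ : EReal) :=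
  EReal.coe_inv (n:ℝ) ▸ EReal.coe_nonneg.2 (by positivity)

private lemma natCast_nonneg_ereal (n : ℕ) : (0:EReal) ≤ (n : EReal) := by
  exact_mod_cast Nat.cast_nonneg' n

private lemma natCast_mul_coe (n : ℕ) (w : ℝ) : (n : EReal) * (w : EReal) = (((n : ℝ) * w : ℝ) : EReal) := by
  rw [← EReal.coe_coe_eq_natCast, ← EReal.coe_mul]

private lemma rate_le_const {u : ℕ → ℝ≥0∞} {w : ℝ}
    (h : ∀ n : ℕ, u n ≤ EReal.exp ((n : EReal) * (w : EReal))) :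
    Filter.limsup (fun n : ℕ => ((n : ℝ)⁻¹ : EReal) * ENNReal.log (u n)) Filter.atTop
      ≤ (w : EReal) := by
  apply limsup_le_of_le (by isBoundedDefault)
  filter_upwards [eventually_ge_atTop 1] with n hn
  have h2 : ENNReal.log (u n) ≤ (n : EReal) * (w : EReal) := by
    simpa [EReal.log_exp] using ENNReal.log_monotone (h n)
  have hn0 : (0:ℝ) < (n:ℝ) := by exact_mod_cast hn
  calc ((n:ℝ)⁻¹ : EReal) * ENNReal.log (u n) ≤ ((n:ℝ)⁻¹ : EReal) * ((n : EReal) * (w : EReal)) :=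
        mul_le_mul_of_nonneg_left h2 (inv_natCast_nonneg n)
    _ = (w : EReal) := by
        rw [natCast_mul_coe, ← EReal.coe_inv, ← EReal.coe_mul]
        norm_cast
        field_simp

private lemma rate_mul {m : ℕ → ℝ≥0∞} (w : ℝ) :
    Filter.limsup (fun n : ℕ => ((n:ℝ)⁻¹:EReal) * ENNReal.log (EReal.exp ((n:EReal)*(w:EReal)) * m n)) atTop
      ≤ (w:EReal) + Filter.limsup (fun n : ℕ => ((n:ℝ)⁻¹:EReal) * ENNReal.log (m n)) atTop := by
  have key : ∀ᶠ n : ℕ in atTop, ((n:ℝ)⁻¹:EReal) * ENNReal.log (EReal.exp ((n:EReal)*(w:EReal)) * m n)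
      = (w:EReal) + ((n:ℝ)⁻¹:EReal) * ENNReal.log (m n) := by
    filter_upwards [eventually_ge_atTop 1] with n hn
    have hn0 : (0:ℝ) < (n:ℝ)⁻¹ := by
      have : (0:ℝ) < (n:ℝ) := by exact_mod_cast hn
      positivity
    rw [ENNReal.log_mul_add, EReal.log_exp, natCast_mul_coe, ← EReal.coe_inv,
      aux_mul_add _ _ hn0]
    congr 2
    have hne : (n:ℝ) ≠ 0 := by
      have : (0:ℝ) < (n:ℝ) := by exact_mod_cast hn
      linarith
    field_simp
  rw [limsup_congr key]
  have h := EReal.limsup_add_le (f := atTop) (u := fun _ : ℕ => (w:EReal))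
      (v := fun n : ℕ => ((n:ℝ)⁻¹:EReal) * ENNReal.log (m n))
      (by rw [limsup_const]; exact .inl (EReal.coe_ne_bot w))
      (by rw [limsup_const]; exact .inl (EReal.coe_ne_top w))
  rw [limsup_const] at h
  exact h

private lemma mul_mono_ereal {r : EReal} (hr : 0 ≤ r) : Monotone (fun y : EReal => r * y) :=
  fun _ _ h => mul_le_mul_of_nonneg_left h hr

private lemma rate_add (u v : ℕ → ℝ≥0∞) :
    Filter.limsup (fun n : ℕ => ((n:ℝ)⁻¹:EReal) * ENNReal.log (u n + v n)) atTop
      ≤ max (Filter.limsup (fun n : ℕ => ((n:ℝ)⁻¹:EReal) * ENNReal.log (u n)) atTop)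
            (Filter.limsup (fun n : ℕ => ((n:ℝ)⁻¹:EReal) * ENNReal.log (v n)) atTop) := by
  set a : ℕ → EReal := fun n => ((n:ℝ)⁻¹:EReal) * ENNReal.log (u n) with ha
  set c : ℕ → EReal := fun n => ((n:ℝ)⁻¹:EReal) * ENNReal.log (v n) with hc
  have hlog2 : ENNReal.log 2 = ((Real.log 2 : ℝ) : EReal) := by
    rw [ENNReal.log_pos_real' (by norm_num)]
    norm_num
  have hub : ∀ᶠ n : ℕ in atTop, ((n:ℝ)⁻¹:EReal) * ENNReal.log (u n + v n)
      ≤ (fun n : ℕ => (((n:ℝ)⁻¹ * Real.log 2 : ℝ) : EReal)) n + (fun n => max (a n) (c n)) n := by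
    filter_upwards [eventually_ge_atTop 1] with n hn
    have hn0 : (0:ℝ) < (n:ℝ)⁻¹ := by
      have : (0:ℝ) < (n:ℝ) := by exact_mod_cast hn
      positivity
    have h1 : u n + v n ≤ 2 * max (u n) (v n) := by
      rw [two_mul]; exact add_le_add (le_max_left _ _) (le_max_right _ _)
    have h2 : ENNReal.log (u n + v n)
        ≤ ((Real.log 2 : ℝ):EReal) + max (ENNReal.log (u n)) (ENNReal.log (v n)) := by
      calc ENNReal.log (u n + v n) ≤ ENNReal.log (2 * max (u n) (v n)) := ENNReal.log_monotone h1
        _ = ENNReal.log 2 + ENNReal.log (max (u n) (v n)) := ENNReal.log_mul_add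
        _ = ((Real.log 2 : ℝ):EReal) + max (ENNReal.log (u n)) (ENNReal.log (v n)) := by
            rw [hlog2, ENNReal.log_monotone.map_max]
    calc ((n:ℝ)⁻¹:EReal) * ENNReal.log (u n + v n)
        ≤ ((n:ℝ)⁻¹:EReal) * (((Real.log 2 : ℝ):EReal) + max (ENNReal.log (u n)) (ENNReal.log (v n))) := by
          rw [← EReal.coe_inv]
          exact mul_le_mul_of_nonneg_left h2 (EReal.coe_nonneg.2 hn0.le)
      _ = (((n:ℝ)⁻¹ * Real.log 2 : ℝ) : EReal)
            + ((n:ℝ)⁻¹:EReal) * max (ENNReal.log (u n)) (ENNReal.log (v n)) := by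
          rw [← EReal.coe_inv, aux_mul_add _ _ hn0]
      _ = (((n:ℝ)⁻¹ * Real.log 2 : ℝ) : EReal) + max (a n) (c n) := by
          congr 1
          exact (mul_mono_ereal (inv_natCast_nonneg n)).map_max
  have h0 : Tendsto (fun n : ℕ => (((n:ℝ)⁻¹ * Real.log 2 : ℝ):EReal)) atTop (nhds (0:EReal)) := by
    have : Tendsto (fun n : ℕ => (n:ℝ)⁻¹ * Real.log 2) atTop (nhds 0) := by
      simpa using tendsto_inv_atTop_nhds_zero_nat.mul_const (Real.log 2)
    have hcont := (continuous_coe_real_ereal.tendsto (0:ℝ)).comp this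
    simpa [Function.comp_def] using hcont
  calc Filter.limsup (fun n : ℕ => ((n:ℝ)⁻¹:EReal) * ENNReal.log (u n + v n)) atTop
      ≤ Filter.limsup ((fun n : ℕ => (((n:ℝ)⁻¹ * Real.log 2 : ℝ):EReal)) + (fun n => max (a n) (c n))) atTop :=
        limsup_le_limsup hub
    _ ≤ Filter.limsup (fun n : ℕ => (((n:ℝ)⁻¹ * Real.log 2 : ℝ):EReal)) atTop
          + Filter.limsup (fun n => max (a n) (c n)) atTop := by
        apply EReal.limsup_add_le
        · rw [h0.limsup_eq]; exact .inl (by simp)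
        · rw [h0.limsup_eq]; exact .inl (by simp)
    _ = max (Filter.limsup a atTop) (Filter.limsup c atTop) := by
        rw [h0.limsup_eq, limsup_max, zero_add]

private lemma aux_key {X : Type*} [TopologicalSpace X] [MeasurableSpace X] [BorelSpace X]
    (μ : ℕ → Measure X) [∀ n, IsProbabilityMeasure (μ n)]
    (J : X → ℝ≥0∞)
    (hub : ∀ F : Set X, IsClosed F →
      Filter.limsup (fun n : ℕ => ((n : ℝ)⁻¹ : EReal) * ENNReal.log (μ n F)) Filter.atTop
        ≤ -(⨅ x ∈ F, (J x : EReal)))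
    (φ : X → EReal) (hφ : Measurable φ)
    (c δ : ℝ) (hδ : 0 < δ)
    (hc : ∀ M : ℝ, (⨆ x, (φ x ⊓ (M:EReal)) - (J x : EReal)) ≤ (c:EReal))
    (hcl : ∀ w : ℝ, c ≤ w → IsClosed {x | (w:EReal) ≤ φ x}) :
    ∀ (k : ℕ) (b : ℝ), b ≤ c + (k+1)*δ →
      Filter.limsup (fun n : ℕ => ((n : ℝ)⁻¹ : EReal) *
          ENNReal.log (∫⁻ x, EReal.exp ((n : EReal) * (φ x ⊓ (b : EReal))) ∂ μ n)) Filter.atTop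
        ≤ ((c + δ : ℝ) : EReal) := by
  intro k
  induction k with
  | zero =>
    intro b hb
    have hb' : b ≤ c + δ := by push_cast at hb; linarith
    apply rate_le_const
    intro n
    have hpt : ∀ x, EReal.exp ((n:EReal) * (φ x ⊓ (b:EReal)))
        ≤ EReal.exp ((n:EReal) * ((c + δ : ℝ):EReal)) := fun x =>
      EReal.exp_monotone <| mul_le_mul_of_nonneg_left
        ((min_le_right _ _).trans (EReal.coe_le_coe_iff.2 hb')) (natCast_nonneg_ereal n)
    calc (∫⁻ x, EReal.exp ((n:EReal) * (φ x ⊓ (b:EReal))) ∂ μ n)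
        ≤ ∫⁻ _, EReal.exp ((n:EReal) * ((c + δ : ℝ):EReal)) ∂ μ n := lintegral_mono hpt
      _ = EReal.exp ((n:EReal) * ((c + δ : ℝ):EReal)) := by
          rw [lintegral_const, measure_univ, mul_one]
  | succ k ih =>
    intro b hb
    by_cases hble : b ≤ c + (k+1)*δ
    · exact ih b hble
    push_neg at hble
    set b' : ℝ := b - δ with hb'def
    have hcb' : c ≤ b' := by
      have h1 : δ ≤ ((k:ℝ)+1)*δ := le_mul_of_one_le_left hδ.le (by have := Nat.cast_nonneg (α := ℝ) k; linarith)
      have h2 : c + ((k:ℝ)+1)*δ < b := by push_cast at hble; linarith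
      simp only [hb'def]; linarith
    have hb'le : b' ≤ c + (k+1)*δ := by
      push_cast at hb ⊢; simp only [hb'def]; linarith
    have hb'b : b' ≤ b := by simp only [hb'def]; linarith
    set F : Set X := {x | ((b':ℝ):EReal) ≤ φ x} with hFdef
    have hF : IsClosed F := hcl b' hcb'
    have hmeas : ∀ n : ℕ, Measurable fun x => EReal.exp ((n:EReal) * (φ x ⊓ (b':EReal))) := by
      intro n
      have : (fun x => EReal.exp ((n:EReal) * (φ x ⊓ (b':EReal))))
          = fun x => (EReal.exp (φ x ⊓ (b':EReal)))^n := by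
        funext x; rw [EReal.exp_nmul]
      rw [this]
      exact ((hφ.min measurable_const).ereal_exp).pow_const n
    have hint : ∀ n : ℕ, (∫⁻ x, EReal.exp ((n:EReal) * (φ x ⊓ (b:EReal))) ∂ μ n)
        ≤ (∫⁻ x, EReal.exp ((n:EReal) * (φ x ⊓ (b':EReal))) ∂ μ n)
          + EReal.exp ((n:EReal) * (b:EReal)) * μ n F := by
      intro n
      have hpt : ∀ x, EReal.exp ((n:EReal) * (φ x ⊓ (b:EReal)))
          ≤ EReal.exp ((n:EReal) * (φ x ⊓ (b':EReal)))
            + F.indicator (fun _ => EReal.exp ((n:EReal) * (b:EReal))) x := by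
        intro x
        by_cases hx : x ∈ F
        · rw [Set.indicator_of_mem hx]
          refine le_add_of_nonneg_of_le zero_le (EReal.exp_monotone ?_)
          exact mul_le_mul_of_nonneg_left (min_le_right _ _) (natCast_nonneg_ereal n)
        · have hxlt : φ x < (b':EReal) := not_le.1 hx
          have hmin : φ x ⊓ (b:EReal) = φ x ⊓ (b':EReal) := by
            rw [min_eq_left hxlt.le, min_eq_left (hxlt.le.trans (EReal.coe_le_coe_iff.2 hb'b))]
          rw [hmin, Set.indicator_of_notMem hx, add_zero]
      calc (∫⁻ x, EReal.exp ((n:EReal) * (φ x ⊓ (b:EReal))) ∂ μ n)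
          ≤ ∫⁻ x, (EReal.exp ((n:EReal) * (φ x ⊓ (b':EReal)))
              + F.indicator (fun _ => EReal.exp ((n:EReal) * (b:EReal))) x) ∂ μ n :=
            lintegral_mono hpt
        _ = (∫⁻ x, EReal.exp ((n:EReal) * (φ x ⊓ (b':EReal))) ∂ μ n)
              + ∫⁻ x, F.indicator (fun _ => EReal.exp ((n:EReal) * (b:EReal))) x ∂ μ n :=
            lintegral_add_left (hmeas n) _
        _ = (∫⁻ x, EReal.exp ((n:EReal) * (φ x ⊓ (b':EReal))) ∂ μ n)
              + EReal.exp ((n:EReal) * (b:EReal)) * μ n F := by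
            rw [lintegral_indicator_const hF.measurableSet]
    have h6 : -(⨅ x ∈ F, (J x : EReal)) ≤ ((c - b' : ℝ):EReal) := by
      rw [EReal.neg_le]
      refine le_iInf₂ fun x hx => ?_
      have hxb : ((b':ℝ):EReal) ≤ φ x := hx
      have h7 : ((b':ℝ):EReal) - (J x : EReal) ≤ (c:EReal) := by
        calc ((b':ℝ):EReal) - (J x:EReal) = (φ x ⊓ (b':EReal)) - (J x:EReal) := by
              rw [min_eq_right hxb]
          _ ≤ ⨆ y, (φ y ⊓ ((b':ℝ):EReal)) - (J y:EReal) :=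
              le_iSup (fun y => (φ y ⊓ ((b':ℝ):EReal)) - (J y:EReal)) x
          _ ≤ (c:EReal) := hc b'
      rcases eq_top_or_lt_top (J x) with hJt | hJlt
      · rw [hJt]; simp
      · have hJr : ((J x : EReal)) = (((J x).toReal : ℝ) : EReal) := by
          rw [← ENNReal.ofReal_toReal hJlt.ne, EReal.coe_ennreal_ofReal,
            max_eq_left ENNReal.toReal_nonneg, ENNReal.ofReal_toReal hJlt.ne]
        rw [hJr] at h7 ⊢
        norm_cast at h7 ⊢
        linarith
    have hA := rate_add (fun n => ∫⁻ x, EReal.exp ((n:EReal) * (φ x ⊓ (b':EReal))) ∂ μ n)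
        (fun n => EReal.exp ((n:EReal) * (b:EReal)) * μ n F)
    have h1 : Filter.limsup (fun n : ℕ => ((n : ℝ)⁻¹ : EReal) *
          ENNReal.log (∫⁻ x, EReal.exp ((n : EReal) * (φ x ⊓ (b : EReal))) ∂ μ n)) Filter.atTop
        ≤ Filter.limsup (fun n : ℕ => ((n : ℝ)⁻¹ : EReal) *
          ENNReal.log ((∫⁻ x, EReal.exp ((n:EReal) * (φ x ⊓ (b':EReal))) ∂ μ n)
            + EReal.exp ((n:EReal) * (b:EReal)) * μ n F)) Filter.atTop := by
      refine limsup_le_limsup (Eventually.of_forall fun n => ?_)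
      dsimp only
      exact mul_le_mul_of_nonneg_left (ENNReal.log_monotone (hint n))
        (EReal.coe_inv (n:ℝ) ▸ inv_natCast_nonneg n)
    have h4 := rate_mul (m := fun n => μ n F) b
    have h5 := hub F hF
    have h8 : (b:EReal) + -(⨅ x ∈ F, (J x : EReal)) ≤ ((c + δ : ℝ):EReal) := by
      calc (b:EReal) + -(⨅ x ∈ F, (J x : EReal)) ≤ (b:EReal) + ((c - b' : ℝ):EReal) :=
            add_le_add_right h6 _
        _ = ((c + δ : ℝ):EReal) := by
            rw [← EReal.coe_add]
            congr 1
            simp only [hb'def]; ring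
    have h9 : Filter.limsup (fun n : ℕ => ((n:ℝ)⁻¹:EReal) *
          ENNReal.log (EReal.exp ((n:EReal)*(b:EReal)) * μ n F)) atTop ≤ ((c + δ : ℝ):EReal) :=
      h4.trans ((add_le_add_right h5 _).trans h8)
    exact h1.trans (hA.trans (max_le (ih b' hb'le) h9))

/-- Key step of the main lemma under condition 2 (closed superlevel sets above the
limiting value): for every real truncation level `b`, the upper bound holds for the
truncated integrand `φ ∧ b`. -/
theorem varadhan_truncated_upper_of_closed_superlevels
    {X : Type*} [TopologicalSpace X] [MeasurableSpace X] [BorelSpace X]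
    (μ : ℕ → Measure X) [∀ n, IsProbabilityMeasure (μ n)]
    (J : X → ℝ≥0∞) (hJ : LowerSemicontinuous J)
    (hub : ∀ F : Set X, IsClosed F →
      Filter.limsup (fun n : ℕ => ((n : ℝ)⁻¹ : EReal) * ENNReal.log (μ n F)) Filter.atTop
        ≤ -(⨅ x ∈ F, (J x : EReal)))
    (hlb : ∀ G : Set X, IsOpen G →
      -(⨅ x ∈ G, (J x : EReal)) ≤
        Filter.liminf (fun n : ℕ => ((n : ℝ)⁻¹ : EReal) * ENNReal.log (μ n G)) Filter.atTop)
    (φ : X → EReal) (hφ : Measurable φ)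
    (hlevel : ∀ w : ℝ,
      Filter.limsup (fun M : ℝ => ⨆ x, (φ x ⊓ (M : EReal)) - (J x : EReal)) Filter.atTop
        ≤ (w : EReal) → IsClosed {x | (w : EReal) ≤ φ x})
    (b : ℝ) :
    Filter.limsup (fun n : ℕ => ((n : ℝ)⁻¹ : EReal) *
        ENNReal.log (∫⁻ x, EReal.exp ((n : EReal) * (φ x ⊓ (b : EReal))) ∂ μ n)) Filter.atTop
      ≤ Filter.limsup (fun M : ℝ => ⨆ x, (φ x ⊓ (M : EReal)) - (J x : EReal)) Filter.atTop := by
  set β := Filter.limsup (fun M : ℝ => ⨆ x, (φ x ⊓ (M : EReal)) - (J x : EReal)) Filter.atTop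
    with hβdef
  by_cases hβtop : β = ⊤
  · rw [hβtop]; exact le_top
  have hsup : ∀ M : ℝ, (⨆ x, (φ x ⊓ (M : EReal)) - (J x : EReal)) ≤ β := by
    intro M
    apply le_limsup_of_frequently_le _ (by isBoundedDefault)
    refine ((eventually_ge_atTop M).frequently).mono fun M' hMM' => ?_
    refine iSup_mono fun x => ?_
    have : φ x ⊓ (M : EReal) ≤ φ x ⊓ (M' : EReal) :=
      inf_le_inf_left _ (EReal.coe_le_coe_iff.2 hMM')
    exact add_le_add_left this _
  refine le_of_forall_gt_imp_ge_of_dense fun e he => ?_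
  rcases eq_top_or_lt_top e with rfl | hetop
  · exact le_top
  have hebot : e ≠ ⊥ := (bot_le.trans_lt he).ne'
  set E := e.toReal with hEdef
  have heE : ((E:ℝ):EReal) = e := EReal.coe_toReal hetop.ne hebot
  obtain ⟨c, δ, hδ, hcd, hc'⟩ : ∃ c δ : ℝ, 0 < δ ∧ c + δ = E ∧
      ∀ M : ℝ, (⨆ x, (φ x ⊓ (M : EReal)) - (J x : EReal)) ≤ (c:EReal) := by
    by_cases hβbot : β = ⊥
    · exact ⟨E - 1, 1, one_pos, by ring, fun M => (hsup M).trans (hβbot ▸ bot_le)⟩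
    · refine ⟨β.toReal, E - β.toReal, ?_, by ring, fun M =>
        (hsup M).trans (EReal.coe_toReal hβtop hβbot).symm.le⟩
      have : β < ((E:ℝ):EReal) := heE ▸ he
      rw [← EReal.coe_toReal hβtop hβbot, EReal.coe_lt_coe_iff] at this
      linarith
  have hβc : β ≤ ((c:ℝ):EReal) := limsup_le_of_le (by isBoundedDefault) (.of_forall hc')
  have hcl : ∀ w : ℝ, c ≤ w → IsClosed {x | (w : EReal) ≤ φ x} := fun w hw =>
    hlevel w (hβc.trans (EReal.coe_le_coe_iff.2 hw))
  set k := ⌈(b - c)/δ⌉₊ with hkdef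
  have hbk : b ≤ c + (k+1)*δ := by
    have h1 : (b - c)/δ ≤ (k:ℝ) := Nat.le_ceil _
    have h2 : b - c ≤ (k:ℝ) * δ := by
      rw [div_le_iff₀ hδ] at h1; linarith
    have h3 : ((k:ℝ)) * δ ≤ ((k:ℝ)+1) * δ := by nlinarith
    push_cast
    linarith
  calc Filter.limsup (fun n : ℕ => ((n : ℝ)⁻¹ : EReal) *
        ENNReal.log (∫⁻ x, EReal.exp ((n : EReal) * (φ x ⊓ (b : EReal))) ∂ μ n)) Filter.atTop
      ≤ ((c + δ : ℝ) : EReal) := aux_key μ J hub φ hφ c δ hδ hc' hcl k b hbk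
    _ = e := by rw [hcd, heE]
end
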